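/- arXiv:0805.0016 — 4 statements merged into one kernel-verified Lean document; each statement's English description precedes it below -/
import Mathlib

section
/- Let n be a positive integer divisible by 3, let Π be a 3-decomposable halfperiod on n elements with wings A, B, C, and let k be an integer with 1 ≤ k < n/2. Then the number of bichromatic (≤k)-critical transpositions of Π equals 3·binom(k+1,2) if k ≤ n/3, and equals 3·binom(n/3+1,2) + (k − n/3)·n if n/3 < k < n/2. -/
/-- A halfperiod on `n` elements: a sequence `pos 0, pos 1, …, pos (C(n,2))` of linear orderings
of `Fin n` (given by the position `pos t x` of element `x` at time `t`), where consecutive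
orderings differ by transposing the elements in positions `move t` and `move t + 1`, and the
final ordering is the reverse of the initial one. Positions are numbered `0, …, n-1`, so the
swap at step `t` is the paper's `(move t + 1)`-transposition. -/
structure Halfperiod (n : ℕ) where
  pos : ℕ → (Fin n ≃ Fin n)
  move : ℕ → ℕ
  move_lt : ∀ t, t < n.choose 2 → move t + 1 < n
  step : ∀ t, t < n.choose 2 → ∀ x : Fin n,
    ((pos (t + 1)) x : ℕ) =
      if ((pos t) x : ℕ) = move t then move t + 1
      else if ((pos t) x : ℕ) = move t + 1 then move t
      else ((pos t) x : ℕ)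
  reverse : ∀ x : Fin n, ((pos (n.choose 2)) x : ℕ) = n - 1 - ((pos 0) x : ℕ)

/-- A halfperiod is 3-decomposable with wings `A`, `B`, `C` if the wings partition the ground set
into three parts of size `n/3`, in the initial ordering all of `A` precedes all of `B`, which
precedes all of `C`, and there are indices `0 < s < t ≤ C(n,2)` such that at time `s+1` the
order of the wings is `B, A, C` and at time `t+1` it is `B, C, A`. -/
def Halfperiod.ThreeDecomp {n : ℕ} (H : Halfperiod n) (A B C : Finset (Fin n)) : Prop :=
  3 * A.card = n ∧ 3 * B.card = n ∧ 3 * C.card = n ∧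
  Disjoint A B ∧ Disjoint A C ∧ Disjoint B C ∧ A ∪ B ∪ C = Finset.univ ∧
  (∀ a ∈ A, ∀ b ∈ B, H.pos 0 a < H.pos 0 b) ∧
  (∀ b ∈ B, ∀ c ∈ C, H.pos 0 b < H.pos 0 c) ∧
  ∃ s t : ℕ, 0 < s ∧ s < t ∧ t ≤ n.choose 2 ∧
    (∀ b ∈ B, ∀ a ∈ A, H.pos (s + 1) b < H.pos (s + 1) a) ∧
    (∀ a ∈ A, ∀ c ∈ C, H.pos (s + 1) a < H.pos (s + 1) c) ∧
    (∀ b ∈ B, ∀ c ∈ C, H.pos (t + 1) b < H.pos (t + 1) c) ∧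
    (∀ c ∈ C, ∀ a ∈ A, H.pos (t + 1) c < H.pos (t + 1) a)

/-- The transposition at step `t` is `(≤ k)`-critical: it is an `i`-transposition or an
`(n-i)`-transposition for some `i ≤ k` (in the paper's 1-based indexing `i = move t + 1`). -/
def Halfperiod.CritAt {n : ℕ} (H : Halfperiod n) (k t : ℕ) : Prop :=
  H.move t + 1 ≤ k ∨ n - k ≤ H.move t + 1

/-- `NcritLe n k H` is the number of `(≤ k)`-critical transpositions of the halfperiod `H`. -/
noncomputable def NcritLe (n k : ℕ) (H : Halfperiod n) : ℕ :=
  Set.ncard {t : ℕ | t < n.choose 2 ∧ H.CritAt k t}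

/-- The transposition at step `t` is monochromatic with respect to the wings `A`, `B`, `C`:
the two exchanged elements (those in positions `move t` and `move t + 1` at time `t`)
belong to the same wing. -/
def Halfperiod.MonoAt {n : ℕ} (H : Halfperiod n) (A B C : Finset (Fin n)) (t : ℕ) : Prop :=
  ∀ x y : Fin n, (H.pos t x : ℕ) = H.move t → (H.pos t y : ℕ) = H.move t + 1 →
    ((x ∈ A ∧ y ∈ A) ∨ (x ∈ B ∧ y ∈ B) ∨ (x ∈ C ∧ y ∈ C))

/-- The number of bichromatic (i.e. not monochromatic) `(≤ k)`-critical transpositions. -/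
noncomputable def NcritBi (n k : ℕ) (H : Halfperiod n) (A B C : Finset (Fin n)) : ℕ :=
  Set.ncard {t : ℕ | t < n.choose 2 ∧ H.CritAt k t ∧ ¬ H.MonoAt A B C t}

section HPAux
open Finset

attribute [local instance] Classical.propDecidable

variable {n : ℕ}

lemma two_mul_choose_two : ∀ c : ℕ, 2 * c.choose 2 = c * (c - 1)
  | 0 => rfl
  | (c+1) => by
      rw [Nat.choose_succ_succ, Nat.mul_add, two_mul_choose_two c, Nat.choose_one_right]
      cases c with
      | zero => rfl
      | succ d =>
        have h1 : d + 1 + 1 - 1 = d + 1 := by omega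
        have h2 : d + 1 - 1 = d := by omega
        rw [h1, h2]; ring

lemma pos_inj (H : Halfperiod n) (t : ℕ) {x y : Fin n}
    (h : (H.pos t x : ℕ) = (H.pos t y : ℕ)) : x = y :=
  (H.pos t).injective (Fin.val_injective h)

lemma exists_pair (H : Halfperiod n) {t : ℕ} (ht : t < n.choose 2) :
    ∃ x y : Fin n, (H.pos t x : ℕ) = H.move t ∧ (H.pos t y : ℕ) = H.move t + 1 := by
  have h := H.move_lt t ht
  exact ⟨(H.pos t).symm ⟨H.move t, by omega⟩, (H.pos t).symm ⟨H.move t + 1, h⟩,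
    by simp, by simp⟩

lemma mono_iff (H : Halfperiod n) (A B C : Finset (Fin n)) {t : ℕ} {x y : Fin n}
    (hx : (H.pos t x : ℕ) = H.move t) (hy : (H.pos t y : ℕ) = H.move t + 1) :
    H.MonoAt A B C t ↔ ((x ∈ A ∧ y ∈ A) ∨ (x ∈ B ∧ y ∈ B) ∨ (x ∈ C ∧ y ∈ C)) := by
  constructor
  · exact fun h => h x y hx hy
  · intro h x' y' hx' hy'
    rwa [pos_inj H t (hx'.trans hx.symm), pos_inj H t (hy'.trans hy.symm)]

lemma pos_step_other (H : Halfperiod n) {t : ℕ} (ht : t < n.choose 2) {x y : Fin n}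
    (hx : (H.pos t x : ℕ) = H.move t) (hy : (H.pos t y : ℕ) = H.move t + 1)
    {z : Fin n} (hzx : z ≠ x) (hzy : z ≠ y) :
    (H.pos (t+1) z : ℕ) = (H.pos t z : ℕ) := by
  have h := H.step t ht z
  have h1 : (H.pos t z : ℕ) ≠ H.move t := fun hc => hzx (pos_inj H t (hc.trans hx.symm))
  have h2 : (H.pos t z : ℕ) ≠ H.move t + 1 := fun hc => hzy (pos_inj H t (hc.trans hy.symm))
  split_ifs at h <;> omega

lemma pos_step_x (H : Halfperiod n) {t : ℕ} (ht : t < n.choose 2) {x : Fin n}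
    (hx : (H.pos t x : ℕ) = H.move t) : (H.pos (t+1) x : ℕ) = H.move t + 1 := by
  have h := H.step t ht x; split_ifs at h <;> omega

lemma pos_step_y (H : Halfperiod n) {t : ℕ} (ht : t < n.choose 2) {y : Fin n}
    (hy : (H.pos t y : ℕ) = H.move t + 1) : (H.pos (t+1) y : ℕ) = H.move t := by
  have h := H.step t ht y; split_ifs at h <;> omega

/-- number of elements of `S` in the window of positions `< w` at time `t`. -/
noncomputable def ac (H : Halfperiod n) (S : Finset (Fin n)) (w t : ℕ) : ℕ :=
  (S.filter (fun x => (H.pos t x : ℕ) < w)).card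

lemma ac_step_ne (H : Halfperiod n) (S : Finset (Fin n)) {w t : ℕ}
    (ht : t < n.choose 2) (hw : H.move t + 1 ≠ w) :
    ac H S w (t+1) = ac H S w t := by
  unfold ac
  congr 1
  apply Finset.filter_congr
  intro x _
  have h := H.step t ht x
  split_ifs at h <;> omega

end HPAux
section HPAux2
open Finset

attribute [local instance] Classical.propDecidable

variable {n : ℕ}

lemma ac_step_mono (H : Halfperiod n) (S : Finset (Fin n)) {w t : ℕ} (ht : t < n.choose 2)
    {x y : Fin n} (hx : (H.pos t x : ℕ) = H.move t) (hy : (H.pos t y : ℕ) = H.move t + 1)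
    (hcase : (x ∈ S ∧ y ∈ S) ∨ (x ∉ S ∧ y ∉ S)) :
    ac H S w (t+1) = ac H S w t := by
  by_cases hw : H.move t + 1 = w
  swap
  · exact ac_step_ne H S ht hw
  have hxy : x ≠ y := fun h => by rw [h, hy] at hx; omega
  rcases hcase with ⟨hxS, hyS⟩ | ⟨hxS, hyS⟩
  · have hxv := pos_step_x H ht hx
    have hyv := pos_step_y H ht hy
    unfold ac
    have hxF : x ∈ S.filter (fun z => (H.pos t z : ℕ) < w) := by
      simp only [Finset.mem_filter]; exact ⟨hxS, by omega⟩
    have hyF' : y ∉ (S.filter (fun z => (H.pos t z : ℕ) < w)).erase x := by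
      simp only [Finset.mem_erase, Finset.mem_filter]
      rintro ⟨-, -, hlt⟩; omega
    have hset : S.filter (fun z => (H.pos (t+1) z : ℕ) < w)
        = insert y ((S.filter (fun z => (H.pos t z : ℕ) < w)).erase x) := by
      ext z
      by_cases hzy : z = y
      · subst hzy
        simp only [Finset.mem_filter, Finset.mem_insert, true_or, iff_true]
        exact ⟨hyS, by omega⟩
      by_cases hzx : z = x
      · subst hzx
        simp only [Finset.mem_filter, Finset.mem_insert, Finset.mem_erase]
        constructor
        · rintro ⟨-, hlt⟩; omega
        · rintro (h | ⟨hne, -⟩)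
          · exact absurd h hxy
          · exact absurd rfl hne
      · simp only [Finset.mem_filter, Finset.mem_insert, Finset.mem_erase, hzy, hzx,
          false_or, ne_eq, not_false_eq_true, true_and]
        rw [pos_step_other H ht hx hy hzx hzy]
    rw [hset, Finset.card_insert_of_notMem hyF', Finset.card_erase_of_mem hxF]
    have hpos : 0 < (S.filter (fun z => (H.pos t z : ℕ) < w)).card :=
      Finset.card_pos.2 ⟨x, hxF⟩
    omega
  · unfold ac
    congr 1
    apply Finset.filter_congr
    intro z hz
    have hzx : z ≠ x := fun h => hxS (h ▸ hz)
    have hzy : z ≠ y := fun h => hyS (h ▸ hz)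
    rw [pos_step_other H ht hx hy hzx hzy]

lemma ac_step_le (H : Halfperiod n) (S : Finset (Fin n)) {w t : ℕ} (ht : t < n.choose 2) :
    ac H S w (t+1) ≤ ac H S w t + 1 ∧ ac H S w t ≤ ac H S w (t+1) + 1 := by
  obtain ⟨x, y, hx, hy⟩ := exists_pair H ht
  have hxv := pos_step_x H ht hx
  have hyv := pos_step_y H ht hy
  constructor
  · calc ac H S w (t+1) ≤ (insert y (S.filter (fun z => (H.pos t z : ℕ) < w))).card := by
          apply Finset.card_le_card
          intro z hz
          simp only [Finset.mem_filter] at hz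
          rcases eq_or_ne z y with rfl | hzy
          · exact Finset.mem_insert_self _ _
          apply Finset.mem_insert_of_mem
          simp only [Finset.mem_filter]
          rcases eq_or_ne z x with rfl | hzx
          · exact ⟨hz.1, by omega⟩
          · exact ⟨hz.1, by rw [← pos_step_other H ht hx hy hzx hzy]; exact hz.2⟩
      _ ≤ ac H S w t + 1 := Finset.card_insert_le _ _
  · calc ac H S w t ≤ (insert x (S.filter (fun z => (H.pos (t+1) z : ℕ) < w))).card := by
          apply Finset.card_le_card
          intro z hz
          simp only [Finset.mem_filter] at hz
          rcases eq_or_ne z x with rfl | hzx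
          · exact Finset.mem_insert_self _ _
          apply Finset.mem_insert_of_mem
          simp only [Finset.mem_filter]
          rcases eq_or_ne z y with rfl | hzy
          · exact ⟨hz.1, by omega⟩
          · exact ⟨hz.1, by rw [pos_step_other H ht hx hy hzx hzy]; exact hz.2⟩
      _ ≤ ac H S w (t+1) + 1 := Finset.card_insert_le _ _

lemma ac_step_main (H : Halfperiod n) (A B C : Finset (Fin n))
    (hAB : Disjoint A B) (hAC : Disjoint A C) (hBC : Disjoint B C)
    (S : Finset (Fin n)) (hS : S = A ∨ S = B ∨ S = C) {w t : ℕ} (ht : t < n.choose 2) :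
    ac H S w (t+1) ≤ ac H S w t + (if H.move t + 1 = w ∧ ¬ H.MonoAt A B C t then 1 else 0) ∧
    ac H S w t ≤ ac H S w (t+1) + (if H.move t + 1 = w ∧ ¬ H.MonoAt A B C t then 1 else 0) := by
  split_ifs with h
  · have := ac_step_le H S (w := w) ht; omega
  · have heq : ac H S w (t+1) = ac H S w t := by
      by_cases hw : H.move t + 1 = w
      · have hmono : H.MonoAt A B C t := by
          by_cases hm : H.MonoAt A B C t
          · exact hm
          · exact absurd ⟨hw, hm⟩ h
        obtain ⟨x, y, hx, hy⟩ := exists_pair H ht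
        have hsw := hmono x y hx hy
        apply ac_step_mono H S ht hx hy
        rcases hS with rfl | rfl | rfl <;> rcases hsw with ⟨h1, h2⟩ | ⟨h1, h2⟩ | ⟨h1, h2⟩ <;>
          first
            | exact Or.inl ⟨h1, h2⟩
            | exact Or.inr ⟨fun hc => Finset.disjoint_left.mp hAB hc h1,
                fun hc => Finset.disjoint_left.mp hAB hc h2⟩
            | exact Or.inr ⟨fun hc => Finset.disjoint_left.mp hAC hc h1,
                fun hc => Finset.disjoint_left.mp hAC hc h2⟩
            | exact Or.inr ⟨fun hc => Finset.disjoint_left.mp hAB h1 hc,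
                fun hc => Finset.disjoint_left.mp hAB h2 hc⟩
            | exact Or.inr ⟨fun hc => Finset.disjoint_left.mp hBC hc h1,
                fun hc => Finset.disjoint_left.mp hBC hc h2⟩
            | exact Or.inr ⟨fun hc => Finset.disjoint_left.mp hAC h1 hc,
                fun hc => Finset.disjoint_left.mp hAC h2 hc⟩
            | exact Or.inr ⟨fun hc => Finset.disjoint_left.mp hBC h1 hc,
                fun hc => Finset.disjoint_left.mp hBC h2 hc⟩
      · exact ac_step_ne H S ht hw
    omega

/-- number of bichromatic `w`-level steps in the time interval `[t1, t2)`. -/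
noncomputable def bcount (H : Halfperiod n) (A B C : Finset (Fin n)) (w t1 t2 : ℕ) : ℕ :=
  ((Finset.Ico t1 t2).filter (fun t => H.move t + 1 = w ∧ ¬ H.MonoAt A B C t)).card

lemma ac_interval (H : Halfperiod n) (A B C : Finset (Fin n))
    (hAB : Disjoint A B) (hAC : Disjoint A C) (hBC : Disjoint B C)
    (S : Finset (Fin n)) (hS : S = A ∨ S = B ∨ S = C) (w : ℕ) :
    ∀ t2, t2 ≤ n.choose 2 → ∀ t1, t1 ≤ t2 →
      ac H S w t2 ≤ ac H S w t1 + bcount H A B C w t1 t2 ∧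
      ac H S w t1 ≤ ac H S w t2 + bcount H A B C w t1 t2 := by
  intro t2
  induction t2 with
  | zero =>
    intro _ t1 h1
    have : t1 = 0 := by omega
    subst this
    simp [bcount]
  | succ t2 ih =>
    intro ht2 t1 h1
    rcases Nat.lt_or_ge t1 (t2+1) with h | h
    · have ht1 : t1 ≤ t2 := by omega
      have hrec := ih (by omega) t1 ht1
      have hstep := ac_step_main H A B C hAB hAC hBC S hS (w := w)
        (show t2 < n.choose 2 by omega)
      have hsplit : bcount H A B C w t1 (t2+1) = bcount H A B C w t1 t2 +
          (if H.move t2 + 1 = w ∧ ¬ H.MonoAt A B C t2 then 1 else 0) := by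
        unfold bcount
        rw [← Finset.Ico_union_Ico_eq_Ico ht1 (Nat.le_succ t2), Finset.filter_union,
          Finset.card_union_of_disjoint
            (Finset.disjoint_filter_filter (Finset.Ico_disjoint_Ico_consecutive t1 t2 (t2+1)))]
        congr 1
        rw [Nat.Ico_succ_singleton, Finset.filter_singleton]
        split_ifs <;> simp
      omega
    · have : t1 = t2 + 1 := by omega
      subst this
      simp [bcount]

end HPAux2
section HPAux3
open Finset

attribute [local instance] Classical.propDecidable

variable {n : ℕ}

lemma card_filter_lt (H : Halfperiod n) (τ w : ℕ) :
    (Finset.univ.filter (fun x : Fin n => (H.pos τ x : ℕ) < w)).card = min w n := by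
  rw [← Finset.card_range (min w n)]
  apply Finset.card_bij (fun x _ => (H.pos τ x : ℕ))
  · intro a ha
    simp only [Finset.mem_filter, Finset.mem_univ, true_and] at ha
    simp only [Finset.mem_range, lt_min_iff]
    exact ⟨ha, (H.pos τ a).isLt⟩
  · intro a _ b _ h
    exact pos_inj H τ h
  · intro v hv
    simp only [Finset.mem_range, lt_min_iff] at hv
    refine ⟨(H.pos τ).symm ⟨v, hv.2⟩, ?_, by simp⟩
    simp only [Finset.mem_filter, Finset.mem_univ, true_and, Equiv.apply_symm_apply]
    exact hv.1

lemma ac_prefix (H : Halfperiod n) {τ a : ℕ} {S : Finset (Fin n)}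
    (hS : S = Finset.univ.filter (fun x => (H.pos τ x : ℕ) < a)) (ha : a ≤ n) (w : ℕ) :
    ac H S w τ = min w a := by
  subst hS
  unfold ac
  rw [Finset.filter_filter]
  have he : (Finset.univ.filter fun x : Fin n => (H.pos τ x : ℕ) < a ∧ (H.pos τ x : ℕ) < w)
      = Finset.univ.filter fun x : Fin n => (H.pos τ x : ℕ) < min w a := by
    apply Finset.filter_congr
    intro x _
    omega
  rw [he, card_filter_lt]
  omega

lemma card_le_above (H : Halfperiod n) (τ : ℕ) (x : Fin n) (T : Finset (Fin n))
    (hT : ∀ z ∈ T, (H.pos τ x : ℕ) < (H.pos τ z : ℕ)) :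
    T.card + (H.pos τ x : ℕ) < n := by
  have hsub : T.image (fun z => (H.pos τ z : ℕ)) ⊆ Finset.Ico ((H.pos τ x : ℕ) + 1) n := by
    intro v hv
    simp only [Finset.mem_image] at hv
    obtain ⟨z, hz, rfl⟩ := hv
    exact Finset.mem_Ico.mpr ⟨hT z hz, (H.pos τ z).isLt⟩
  have hc := Finset.card_le_card hsub
  rw [Finset.card_image_of_injOn (fun a _ b _ h => pos_inj H τ h), Nat.card_Ico] at hc
  have := (H.pos τ x).isLt
  omega

lemma card_le_below (H : Halfperiod n) (τ : ℕ) (x : Fin n) (T : Finset (Fin n))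
    (hT : ∀ z ∈ T, (H.pos τ z : ℕ) < (H.pos τ x : ℕ)) :
    T.card ≤ (H.pos τ x : ℕ) := by
  have hsub : T.image (fun z => (H.pos τ z : ℕ)) ⊆ Finset.range (H.pos τ x : ℕ) := by
    intro v hv
    simp only [Finset.mem_image] at hv
    obtain ⟨z, hz, rfl⟩ := hv
    exact Finset.mem_range.mpr (hT z hz)
  have hc := Finset.card_le_card hsub
  rwa [Finset.card_image_of_injOn (fun a _ b _ h => pos_inj H τ h), Finset.card_range] at hc

lemma ac_union (H : Halfperiod n) {P Q : Finset (Fin n)} (h : Disjoint P Q) (w τ : ℕ) :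
    ac H (P ∪ Q) w τ = ac H P w τ + ac H Q w τ := by
  unfold ac
  rw [Finset.filter_union, Finset.card_union_of_disjoint (Finset.disjoint_filter_filter h)]

lemma ac_block (H : Halfperiod n) {τ m : ℕ} {P Q R : Finset (Fin n)} (hn : n = 3 * m)
    (hm : 1 ≤ m) (hP : P.card = m) (hQ : Q.card = m) (hR : R.card = m)
    (hPQ : Disjoint P Q) (hPR : Disjoint P R) (hQR : Disjoint Q R)
    (hU : P ∪ Q ∪ R = Finset.univ)
    (h1 : ∀ p ∈ P, ∀ q ∈ Q, H.pos τ p < H.pos τ q)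
    (h2 : ∀ q ∈ Q, ∀ r ∈ R, H.pos τ q < H.pos τ r) (w : ℕ) :
    ac H P w τ = min w m ∧ ac H Q w τ = min w (2*m) - min w m ∧
    ac H R w τ = min w n - min w (2*m) := by
  obtain ⟨q0, hq0⟩ := Finset.card_pos.mp (show 0 < Q.card by omega)
  have h1' : ∀ p ∈ P, ∀ q ∈ Q, (H.pos τ p : ℕ) < (H.pos τ q : ℕ) := by
    intro p hp q hq; exact h1 p hp q hq
  have h2' : ∀ q ∈ Q, ∀ r ∈ R, (H.pos τ q : ℕ) < (H.pos τ r : ℕ) := by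
    intro q hq r hr; exact h2 q hq r hr
  -- position bounds
  have hPb : ∀ p ∈ P, (H.pos τ p : ℕ) < m := by
    intro p hp
    have := card_le_above H τ p (Q ∪ R) (by
      intro z hz
      rcases Finset.mem_union.mp hz with hz | hz
      · exact h1' p hp z hz
      · exact (h1' p hp q0 hq0).trans (h2' q0 hq0 z hz))
    rw [Finset.card_union_of_disjoint hQR, hQ, hR] at this
    omega
  have hQb : ∀ q ∈ Q, m ≤ (H.pos τ q : ℕ) ∧ (H.pos τ q : ℕ) < 2*m := by
    intro q hq
    constructor
    · have := card_le_below H τ q P (fun z hz => h1' z hz q hq)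
      omega
    · have := card_le_above H τ q R (fun z hz => h2' q hq z hz)
      omega
  have hRb : ∀ r ∈ R, 2*m ≤ (H.pos τ r : ℕ) := by
    intro r hr
    have := card_le_below H τ r (P ∪ Q) (by
      intro z hz
      rcases Finset.mem_union.mp hz with hz | hz
      · exact (h1' z hz q0 hq0).trans (h2' q0 hq0 r hr)
      · exact h2' z hz r hr)
    rw [Finset.card_union_of_disjoint hPQ, hP, hQ] at this
    omega
  -- block characterizations
  have hPset : P = Finset.univ.filter (fun x => (H.pos τ x : ℕ) < m) := by
    apply Finset.eq_of_subset_of_card_le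
    · intro p hp
      simp only [Finset.mem_filter, Finset.mem_univ, true_and]
      exact hPb p hp
    · rw [card_filter_lt, hP]
      omega
  have hPQset : P ∪ Q = Finset.univ.filter (fun x => (H.pos τ x : ℕ) < 2*m) := by
    apply Finset.eq_of_subset_of_card_le
    · intro z hz
      simp only [Finset.mem_filter, Finset.mem_univ, true_and]
      rcases Finset.mem_union.mp hz with hz | hz
      · have := hPb z hz; omega
      · exact (hQb z hz).2
    · rw [card_filter_lt, Finset.card_union_of_disjoint hPQ, hP, hQ]
      omega
  have hUset : (Finset.univ : Finset (Fin n)) =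
      Finset.univ.filter (fun x => (H.pos τ x : ℕ) < n) := by
    symm
    apply Finset.filter_true_of_mem
    intro x _
    exact (H.pos τ x).isLt
  have hacP : ac H P w τ = min w m := ac_prefix H hPset (by omega) w
  have hacPQ : ac H (P ∪ Q) w τ = min w (2*m) := ac_prefix H hPQset (by omega) w
  have hacU : ac H Finset.univ w τ = min w n := ac_prefix H hUset le_rfl w
  have hPQu := ac_union H hPQ w τ
  have hPQRu : ac H (P ∪ Q ∪ R) w τ = ac H (P ∪ Q) w τ + ac H R w τ :=
    ac_union H (by
      rw [Finset.disjoint_union_left]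
      exact ⟨hPR, hQR⟩) w τ
  rw [hU, hacU, hacPQ] at hPQRu; rw [hacPQ, hacP] at hPQu
  refine ⟨hacP, ?_, ?_⟩ <;> omega
section HPAux4
open Finset

attribute [local instance] Classical.propDecidable

variable {n : ℕ}

lemma hp_flip (H : Halfperiod n) {t : ℕ} (ht : t < n.choose 2) {x y : Fin n}
    (h1 : (H.pos t x : ℕ) < (H.pos t y : ℕ))
    (h2 : ¬ ((H.pos (t+1) x : ℕ) < (H.pos (t+1) y : ℕ))) :
    (H.pos t x : ℕ) = H.move t ∧ (H.pos t y : ℕ) = H.move t + 1 := by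
  have hx := H.step t ht x
  have hy := H.step t ht y
  split_ifs at hx hy <;> omega

lemma exists_cross (H : Halfperiod n) {x y : Fin n}
    (h0 : (H.pos 0 x : ℕ) < (H.pos 0 y : ℕ))
    (hN : ¬ ((H.pos (n.choose 2) x : ℕ) < (H.pos (n.choose 2) y : ℕ))) :
    ∃ t, t < n.choose 2 ∧ (H.pos t x : ℕ) = H.move t ∧ (H.pos t y : ℕ) = H.move t + 1 := by
  have hex : ∃ u, ¬ ((H.pos u x : ℕ) < (H.pos u y : ℕ)) ∧ u ≤ n.choose 2 :=
    ⟨n.choose 2, hN, le_rfl⟩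
  have hspec := Nat.find_spec hex
  set u := Nat.find hex with hu_def
  obtain ⟨hu1, hu2⟩ := hspec
  have hu0 : u ≠ 0 := by
    intro h
    rw [h] at hu1
    exact hu1 h0
  have humin : ¬ (¬ ((H.pos (u-1) x : ℕ) < (H.pos (u-1) y : ℕ)) ∧ u - 1 ≤ n.choose 2) :=
    Nat.find_min hex (by rw [← hu_def]; omega)
  have hne : n.choose 2 ≠ 0 := by
    intro h
    have : u = 0 := by omega
    exact hu0 this
  have hprev : (H.pos (u-1) x : ℕ) < (H.pos (u-1) y : ℕ) := by
    by_contra hc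
    exact humin ⟨hc, by omega⟩
  have hu1' : ¬ ((H.pos (u-1+1) x : ℕ) < (H.pos (u-1+1) y : ℕ)) := by
    have : u - 1 + 1 = u := by omega
    rw [this]
    exact hu1
  have hlt : u - 1 < n.choose 2 := by omega
  exact ⟨u - 1, hlt, hp_flip H hlt hprev hu1'⟩

lemma card_lt_pairs {α : Type*} (S : Finset α) (f : α → ℕ)
    (hf : ∀ a ∈ S, ∀ b ∈ S, f a = f b → a = b) :
    ((S ×ˢ S).filter (fun q => f q.1 < f q.2)).card = S.card.choose 2 := by
  classical
  set L := (S ×ˢ S).filter (fun q => f q.1 < f q.2) with hL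
  set G := (S ×ˢ S).filter (fun q => f q.2 < f q.1) with hG
  set D := (S ×ˢ S).filter (fun q => f q.1 = f q.2) with hD
  have hGL : G.card = L.card := by
    apply Finset.card_bij (fun q _ => Prod.swap q)
    · intro q hq
      simp only [hG, hL, Finset.mem_filter, Finset.mem_product] at hq ⊢
      exact ⟨⟨hq.1.2, hq.1.1⟩, hq.2⟩
    · intro a _ b _ h
      exact Prod.swap_injective h
    · intro q hq
      refine ⟨q.swap, ?_, by simp⟩
      simp only [hG, hL, Finset.mem_filter, Finset.mem_product] at hq ⊢
      exact ⟨⟨hq.1.2, hq.1.1⟩, hq.2⟩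
  have hDcard : D.card = S.card := by
    have hDdiag : D = S.diag := by
      ext q
      simp only [hD, Finset.mem_filter, Finset.mem_product, Finset.mem_diag]
      constructor
      · rintro ⟨⟨hq1, hq2⟩, hfeq⟩
        exact ⟨hq1, (hf _ hq2 _ hq1 hfeq.symm).symm⟩
      · rintro ⟨hq1, hq2⟩
        exact ⟨⟨hq1, hq2 ▸ hq1⟩, by rw [hq2]⟩
    rw [hDdiag, Finset.diag_card]
  have hGD : Disjoint G D := by
    rw [hG, hD]
    apply Finset.disjoint_left.mpr
    intro q hq1 hq2
    simp only [Finset.mem_filter] at hq1 hq2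
    omega
  have hLGD : Disjoint L (G ∪ D) := by
    rw [hL, hG, hD, Finset.disjoint_union_right]
    constructor <;>
      (apply Finset.disjoint_left.mpr
       intro q hq1 hq2
       simp only [Finset.mem_filter] at hq1 hq2
       omega)
  have hunion : L ∪ (G ∪ D) = S ×ˢ S := by
    rw [hL, hG, hD, ← Finset.filter_or, ← Finset.filter_or]
    apply Finset.filter_true_of_mem
    intro q _
    omega
  have htot : L.card + (G.card + D.card) = S.card * S.card := by
    rw [← Finset.card_union_of_disjoint hGD, ← Finset.card_union_of_disjoint hLGD, hunion,
      Finset.card_product]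
  have hsq : S.card * S.card = S.card * (S.card - 1) + S.card := by
    cases S.card with
    | zero => rfl
    | succ c => simp [Nat.succ_sub_one]; ring
  have hch := two_mul_choose_two S.card
  have h2L : 2 * L.card = S.card * (S.card - 1) := by
    rw [hGL] at htot
    rw [hDcard] at htot
    omega
  omega
section HPAux5
open Finset

attribute [local instance] Classical.propDecidable

variable {n : ℕ}

/-- the element at position `move t` at time `t` (junk position `0` if `t` is out of range). -/
noncomputable def swA (H : Halfperiod n) (hn : 0 < n) (t : ℕ) : Fin n :=
  (H.pos t).symm ⟨if h : t < n.choose 2 then H.move t else 0, by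
    split_ifs with h
    · have := H.move_lt t h; omega
    · exact hn⟩

/-- the element at position `move t + 1` at time `t` (junk position `0` if out of range). -/
noncomputable def swB (H : Halfperiod n) (hn : 0 < n) (t : ℕ) : Fin n :=
  (H.pos t).symm ⟨if h : t < n.choose 2 then H.move t + 1 else 0, by
    split_ifs with h
    · exact H.move_lt t h
    · exact hn⟩

lemma swA_pos (H : Halfperiod n) (hn : 0 < n) {t : ℕ} (ht : t < n.choose 2) :
    (H.pos t (swA H hn t) : ℕ) = H.move t := by
  simp [swA, dif_pos ht]

lemma swB_pos (H : Halfperiod n) (hn : 0 < n) {t : ℕ} (ht : t < n.choose 2) :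
    (H.pos t (swB H hn t) : ℕ) = H.move t + 1 := by
  simp [swB, dif_pos ht]

/-- same-wing predicate -/
def SW (A B C : Finset (Fin n)) (x y : Fin n) : Prop :=
  (x ∈ A ∧ y ∈ A) ∨ (x ∈ B ∧ y ∈ B) ∨ (x ∈ C ∧ y ∈ C)

lemma SW_comm {A B C : Finset (Fin n)} {x y : Fin n} (h : SW A B C x y) : SW A B C y x := by
  unfold SW at *
  tauto

lemma total_bi (H : Halfperiod n) (A B C : Finset (Fin n)) {m : ℕ} (hnm : n = 3 * m)
    (hm : 1 ≤ m)
    (hA : A.card = m) (hB : B.card = m) (hC : C.card = m)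
    (hAB : Disjoint A B) (hAC : Disjoint A C) (hBC : Disjoint B C)
    (hU : A ∪ B ∪ C = Finset.univ) :
    ((Finset.range (n.choose 2)).filter (fun t => ¬ H.MonoAt A B C t)).card = 3 * (m * m) := by
  have hn : 0 < n := by omega
  set f : Fin n → ℕ := fun x => (H.pos 0 x : ℕ) with hf
  have hfinj : ∀ a ∈ (Finset.univ : Finset (Fin n)), ∀ b ∈ Finset.univ, f a = f b → a = b :=
    fun a _ b _ h => pos_inj H 0 h
  set Pairs := ((Finset.univ : Finset (Fin n)) ×ˢ Finset.univ).filter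
    (fun q => f q.1 < f q.2) with hPairs
  have hPairsCard : Pairs.card = n.choose 2 := by
    rw [hPairs, card_lt_pairs _ _ hfinj, Finset.card_univ, Fintype.card_fin]
  -- reversal fact
  have hrev : ∀ x y : Fin n, f x < f y →
      ¬ ((H.pos (n.choose 2) x : ℕ) < (H.pos (n.choose 2) y : ℕ)) := by
    intro x y hxy
    rw [H.reverse x, H.reverse y]
    have h1 : (H.pos 0 x : ℕ) < n := (H.pos 0 x).isLt
    have h2 : (H.pos 0 y : ℕ) < n := (H.pos 0 y).isLt
    simp only [hf] at hxy
    omega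
  -- the map from steps to pairs
  set φ : ℕ → Fin n × Fin n := fun t =>
    if f (swA H hn t) < f (swB H hn t) then (swA H hn t, swB H hn t)
    else (swB H hn t, swA H hn t) with hφ
  have hswne : ∀ t, t < n.choose 2 → swA H hn t ≠ swB H hn t := by
    intro t ht h
    have h1 := swA_pos H hn ht
    have h2 := swB_pos H hn ht
    rw [h] at h1
    omega
  have hφmem : ∀ t ∈ Finset.range (n.choose 2), φ t ∈ Pairs := by
    intro t ht
    rw [Finset.mem_range] at ht
    have hne : f (swA H hn t) ≠ f (swB H hn t) := by
      intro h
      exact hswne t ht (pos_inj H 0 h)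
    rw [hφ]
    simp only
    split_ifs with h
    · simp only [hPairs, Finset.mem_filter, Finset.mem_product, Finset.mem_univ, true_and]
      exact h
    · simp only [hPairs, Finset.mem_filter, Finset.mem_product, Finset.mem_univ, true_and]
      omega
  have hφsurj : ∀ q ∈ Pairs, ∃ t, ∃ _ : t ∈ Finset.range (n.choose 2), φ t = q := by
    intro q hq
    simp only [hPairs, Finset.mem_filter, Finset.mem_product, Finset.mem_univ, true_and] at hq
    obtain ⟨t, ht, hx, hy⟩ := exists_cross H hq (hrev q.1 q.2 hq)
    have hA1 : swA H hn t = q.1 :=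
      pos_inj H t (by rw [swA_pos H hn ht, hx])
    have hB1 : swB H hn t = q.2 :=
      pos_inj H t (by rw [swB_pos H hn ht, hy])
    refine ⟨t, Finset.mem_range.mpr ht, ?_⟩
    rw [hφ]
    simp only
    rw [hA1, hB1, if_pos hq]
  have hφinj := Finset.inj_on_of_surj_on_of_card_le
    (s := Finset.range (n.choose 2)) (t := Pairs)
    (fun t _ => φ t) hφmem hφsurj (by rw [Finset.card_range, hPairsCard])
  -- Mono at t iff the pair is same-wing
  have hmono_iff : ∀ t, t < n.choose 2 →
      (H.MonoAt A B C t ↔ SW A B C (φ t).1 (φ t).2) := by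
    intro t ht
    have h1 := swA_pos H hn ht
    have h2 := swB_pos H hn ht
    rw [mono_iff H A B C h1 h2]
    rw [hφ]
    simp only
    split_ifs with h
    · exact Iff.rfl
    · exact ⟨fun hh => SW_comm hh, fun hh => SW_comm hh⟩
  -- bijection between bichromatic steps and bichromatic pairs
  have hcard : ((Finset.range (n.choose 2)).filter (fun t => ¬ H.MonoAt A B C t)).card =
      (Pairs.filter (fun q => ¬ SW A B C q.1 q.2)).card := by
    apply Finset.card_bij (fun t _ => φ t)
    · intro t ht
      simp only [Finset.mem_filter, Finset.mem_range] at ht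
      simp only [Finset.mem_filter]
      exact ⟨hφmem t (Finset.mem_range.mpr ht.1),
        fun hsw => ht.2 ((hmono_iff t ht.1).mpr hsw)⟩
    · intro a ha b hb h
      simp only [Finset.mem_filter] at ha hb
      exact hφinj ha.1 hb.1 h
    · intro q hq
      simp only [Finset.mem_filter] at hq
      obtain ⟨t, ht, hφt⟩ := hφsurj q hq.1
      refine ⟨t, Finset.mem_filter.mpr ⟨ht, ?_⟩, hφt⟩
      rw [Finset.mem_range] at ht
      intro hmono
      exact hq.2 (hφt ▸ (hmono_iff t ht).mp hmono)
  rw [hcard]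
  -- count the bichromatic pairs
  have hsplit := Finset.card_filter_add_card_filter_not
    (s := Pairs) (p := fun q => SW A B C q.1 q.2)
  have hSWset : Pairs.filter (fun q => SW A B C q.1 q.2) =
      ((A ×ˢ A).filter (fun q => f q.1 < f q.2)) ∪
      ((B ×ˢ B).filter (fun q => f q.1 < f q.2)) ∪
      ((C ×ˢ C).filter (fun q => f q.1 < f q.2)) := by
    ext q
    simp only [hPairs, SW, Finset.mem_filter, Finset.mem_union, Finset.mem_product,
      Finset.mem_univ, true_and]
    tauto
  have hd1 : Disjoint ((A ×ˢ A).filter (fun q => f q.1 < f q.2))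
      ((B ×ˢ B).filter (fun q => f q.1 < f q.2)) := by
    apply Finset.disjoint_left.mpr
    intro q hq1 hq2
    simp only [Finset.mem_filter, Finset.mem_product] at hq1 hq2
    exact Finset.disjoint_left.mp hAB hq1.1.1 hq2.1.1
  have hd2 : Disjoint (((A ×ˢ A).filter (fun q => f q.1 < f q.2)) ∪
      ((B ×ˢ B).filter (fun q => f q.1 < f q.2)))
      ((C ×ˢ C).filter (fun q => f q.1 < f q.2)) := by
    apply Finset.disjoint_left.mpr
    intro q hq1 hq2
    simp only [Finset.mem_union, Finset.mem_filter, Finset.mem_product] at hq1 hq2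
    rcases hq1 with hq1 | hq1
    · exact Finset.disjoint_left.mp hAC hq1.1.1 hq2.1.1
    · exact Finset.disjoint_left.mp hBC hq1.1.1 hq2.1.1
  have hSWcard : (Pairs.filter (fun q => SW A B C q.1 q.2)).card = 3 * m.choose 2 := by
    rw [hSWset, Finset.card_union_of_disjoint hd2, Finset.card_union_of_disjoint hd1,
      card_lt_pairs A f (fun a _ b _ h => pos_inj H 0 h),
      card_lt_pairs B f (fun a _ b _ h => pos_inj H 0 h),
      card_lt_pairs C f (fun a _ b _ h => pos_inj H 0 h), hA, hB, hC]
    ring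
  obtain ⟨d, rfl⟩ : ∃ d, m = d + 1 := ⟨m - 1, by omega⟩
  have e1 : n * (n - 1) + 3 * (d + 1) = 9 * ((d + 1) * (d + 1)) := by
    rw [hnm]
    have h31 : 3 * (d + 1) - 1 = 3 * d + 2 := by omega
    rw [h31]
    ring
  have e2 : (d + 1) * ((d + 1) - 1) + (d + 1) = (d + 1) * (d + 1) := by
    simp only [Nat.add_sub_cancel]
    ring
  have h1 := two_mul_choose_two n
  have h2 := two_mul_choose_two (d + 1)
  rw [hSWcard, hPairsCard] at hsplit
  linarith
section HPAux6
open Finset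

attribute [local instance] Classical.propDecidable

variable {n : ℕ}

/-- number of bichromatic `v`-level steps in the whole halfperiod -/
noncomputable def cnt (H : Halfperiod n) (A B C : Finset (Fin n)) (v : ℕ) : ℕ :=
  bcount H A B C v 0 (n.choose 2)

lemma sum_cnt (H : Halfperiod n) (A B C : Finset (Fin n)) :
    ∑ v ∈ Finset.Ico 1 n, cnt H A B C v =
    ((Finset.range (n.choose 2)).filter (fun t => ¬ H.MonoAt A B C t)).card := by
  have hmem : ∀ t ∈ (Finset.range (n.choose 2)).filter (fun t => ¬ H.MonoAt A B C t),
      H.move t + 1 ∈ Finset.Ico 1 n := by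
    intro t ht
    simp only [Finset.mem_filter, Finset.mem_range] at ht
    have := H.move_lt t ht.1
    simp only [Finset.mem_Ico]
    omega
  rw [Finset.card_eq_sum_card_fiberwise hmem]
  apply Finset.sum_congr rfl
  intro v _
  unfold cnt bcount
  rw [Finset.filter_filter, ← Nat.Ico_zero_eq_range]
  congr 1
  apply Finset.filter_congr
  intro t _
  tauto

lemma cnt_ge (H : Halfperiod n) (A B C : Finset (Fin n)) {m : ℕ} (hnm : n = 3 * m)
    (hm : 1 ≤ m) (hA : A.card = m) (hB : B.card = m) (hC : C.card = m)
    (hAB : Disjoint A B) (hAC : Disjoint A C) (hBC : Disjoint B C)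
    (hU : A ∪ B ∪ C = Finset.univ)
    (hAB0 : ∀ a ∈ A, ∀ b ∈ B, H.pos 0 a < H.pos 0 b)
    (hBC0 : ∀ b ∈ B, ∀ c ∈ C, H.pos 0 b < H.pos 0 c)
    {s : ℕ} (hs : s + 1 ≤ n.choose 2)
    (hBA : ∀ b ∈ B, ∀ a ∈ A, H.pos (s+1) b < H.pos (s+1) a)
    (hAC1 : ∀ a ∈ A, ∀ c ∈ C, H.pos (s+1) a < H.pos (s+1) c)
    {v : ℕ} (hv1 : 1 ≤ v) (hv2 : v < n) :
    min (2*v) (n - v) ≤ cnt H A B C v := by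
  set N := n.choose 2 with hN
  -- chains at time N (final ordering is C, B, A)
  have hCBN : ∀ c ∈ C, ∀ b ∈ B, H.pos N c < H.pos N b := by
    intro c hc b hb
    have h0 : (H.pos 0 b : ℕ) < (H.pos 0 c : ℕ) := hBC0 b hb c hc
    have hb' := H.reverse b
    have hc' := H.reverse c
    have hlt := (H.pos 0 c).isLt
    exact Fin.lt_def.mpr (by rw [hN]; omega)
  have hBAN : ∀ b ∈ B, ∀ a ∈ A, H.pos N b < H.pos N a := by
    intro b hb a ha
    have h0 : (H.pos 0 a : ℕ) < (H.pos 0 b : ℕ) := hAB0 a ha b hb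
    have hb' := H.reverse b
    have ha' := H.reverse a
    have hlt := (H.pos 0 b).isLt
    exact Fin.lt_def.mpr (by rw [hN]; omega)
  -- wing unions
  have hUB : B ∪ A ∪ C = Finset.univ := by
    rw [Finset.union_comm B A]; exact hU
  have hUC : C ∪ B ∪ A = Finset.univ := by
    rw [← hU]; ext z; simp only [Finset.mem_union]; tauto
  -- block values
  obtain ⟨hacA0, -, -⟩ :=
    ac_block H hnm hm hA hB hC hAB hAC hBC hU hAB0 hBC0 v
  obtain ⟨-, hacA1, hacC1⟩ :=
    ac_block H (τ := s+1) hnm hm hB hA hC hAB.symm hBC hAC hUB hBA hAC1 v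
  obtain ⟨hacCN, -, -⟩ :=
    ac_block H (τ := N) hnm hm hC hB hA hBC.symm hAC.symm hAB.symm hUC hCBN hBAN v
  -- interval estimates
  have h1 := ac_interval H A B C hAB hAC hBC A (Or.inl rfl) v (s+1) hs 0 (Nat.zero_le _)
  have h2 := ac_interval H A B C hAB hAC hBC C (Or.inr (Or.inr rfl)) v N le_rfl (s+1) hs
  -- split the total count
  have hsplitc : cnt H A B C v = bcount H A B C v 0 (s+1) + bcount H A B C v (s+1) N := by
    unfold cnt bcount
    rw [← Finset.Ico_union_Ico_eq_Ico (Nat.zero_le (s+1)) hs, Finset.filter_union,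
      Finset.card_union_of_disjoint
        (Finset.disjoint_filter_filter (Finset.Ico_disjoint_Ico_consecutive 0 (s+1) N))]
  rw [hsplitc]
  rw [hacA0] at h1
  rw [hacA1] at h1
  rw [hacC1] at h2
  rw [hacCN] at h2
  omega

lemma sum_Ico_one_id (c : ℕ) : ∑ v ∈ Finset.Ico 1 c, v = ∑ v ∈ Finset.range c, v := by
  rcases le_or_gt 1 c with h | h
  · rw [Finset.range_eq_Ico, ← Finset.sum_Ico_consecutive _ (Nat.zero_le 1) h]
    simp
  · have : c = 0 := by omega
    subst this
    simp

lemma two_mul_sum_Ico_one (c : ℕ) : 2 * (∑ v ∈ Finset.Ico 1 c, v) = c * (c - 1) := by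
  rw [sum_Ico_one_id, Nat.mul_comm, Finset.sum_range_id_mul_two]

lemma sumL {m : ℕ} (hm : 1 ≤ m) :
    ∑ v ∈ Finset.Ico 1 (3*m), min (2*v) (3*m - v) = 3 * (m * m) := by
  rw [← Finset.sum_Ico_consecutive _ (show 1 ≤ m+1 by omega) (show m+1 ≤ 3*m by omega)]
  have e1 : ∑ v ∈ Finset.Ico 1 (m+1), min (2*v) (3*m - v) = 2 * ∑ v ∈ Finset.Ico 1 (m+1), v := by
    rw [Finset.mul_sum]
    apply Finset.sum_congr rfl
    intro v hv
    simp only [Finset.mem_Ico] at hv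
    omega
  have e2 : ∑ v ∈ Finset.Ico (m+1) (3*m), min (2*v) (3*m - v)
      = ∑ v ∈ Finset.Ico (m+1) (3*m), (3*m - v) := by
    apply Finset.sum_congr rfl
    intro v hv
    simp only [Finset.mem_Ico] at hv
    omega
  have e3 : ∑ v ∈ Finset.Ico (m+1) (3*m), (3*m - v) = ∑ v ∈ Finset.Ico 1 (2*m), v := by
    have := Finset.sum_Ico_reflect (fun j => j) (m+1) (show 3*m ≤ 3*m + 1 by omega)
    rw [this]
    have ha : 3*m+1-3*m = 1 := by omega
    have hb : 3*m+1-(m+1) = 2*m := by omega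
    rw [ha, hb]
  rw [e1, e2, e3]
  have g1 := two_mul_sum_Ico_one (m+1)
  have g2 := two_mul_sum_Ico_one (2*m)
  obtain ⟨d, rfl⟩ : ∃ d, m = d + 1 := ⟨m - 1, by omega⟩
  have g1' : (d+1+1) * (d+1+1-1) = (d+1)*(d+1) + (d+1) := by
    simp only [Nat.add_sub_cancel]
    ring
  have g2' : (2*(d+1)) * (2*(d+1)-1) = 4*((d+1)*(d+1)) - 2*(d+1) := by
    have h21 : 2*(d+1) - 1 = 2*d+1 := by omega
    rw [h21]
    have : (2*(d+1)) * (2*d+1) + 2*(d+1) = 4*((d+1)*(d+1)) := by ring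
    omega
  have hq : 4*((d+1)*(d+1)) ≥ 2*(d+1) := by nlinarith
  omega

end HPAux6
section HPAuxFinal
open Finset

attribute [local instance] Classical.propDecidable

theorem NcritBi_of_threeDecomposable' (n k : ℕ) (hn : 0 < n) (h3 : 3 ∣ n)
    (hk1 : 1 ≤ k) (hk2 : 2 * k < n)
    (H : Halfperiod n) (A B C : Finset (Fin n)) (hdec : H.ThreeDecomp A B C) :
    (k ≤ n / 3 → NcritBi n k H A B C = 3 * (k + 1).choose 2) ∧
    (n / 3 < k → NcritBi n k H A B C = 3 * (n / 3 + 1).choose 2 + (k - n / 3) * n) := by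
  obtain ⟨hA3, hB3, hC3, hAB, hAC, hBC, hU, hAB0, hBC0, s, t, hs0, hst, htN, hBA, hAC1, -, -⟩ := hdec
  have hdiv := Nat.div_mul_cancel h3
  set m := n / 3 with hm_def
  have hnm : n = 3 * m := by omega
  have hm : 1 ≤ m := by omega
  have hA : A.card = m := by omega
  have hB : B.card = m := by omega
  have hC : C.card = m := by omega
  have hs1 : s + 1 ≤ n.choose 2 := by omega
  -- pointwise lower bound
  have hge : ∀ v ∈ Finset.Ico 1 n, min (2*v) (n - v) ≤ cnt H A B C v := by
    intro v hv
    simp only [Finset.mem_Ico] at hv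
    exact cnt_ge H A B C hnm hm hA hB hC hAB hAC hBC hU hAB0 hBC0 hs1 hBA hAC1 hv.1 hv.2
  -- equal sums
  have hsum : ∑ v ∈ Finset.Ico 1 n, min (2*v) (n - v) = ∑ v ∈ Finset.Ico 1 n, cnt H A B C v := by
    rw [sum_cnt, total_bi H A B C hnm hm hA hB hC hAB hAC hBC hU]
    rw [hnm]
    exact sumL hm
  have hpt : ∀ v ∈ Finset.Ico 1 n, min (2*v) (n - v) = cnt H A B C v :=
    (Finset.sum_eq_sum_iff_of_le hge).mp hsum
  -- NcritBi as a Finset card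
  have hNc : NcritBi n k H A B C =
      ((Finset.range (n.choose 2)).filter
        (fun t' => H.CritAt k t' ∧ ¬ H.MonoAt A B C t')).card := by
    rw [NcritBi, show {t' : ℕ | t' < n.choose 2 ∧ H.CritAt k t' ∧ ¬ H.MonoAt A B C t'} =
        ↑((Finset.range (n.choose 2)).filter
          (fun t' => H.CritAt k t' ∧ ¬ H.MonoAt A B C t')) from by
      ext u
      simp [Finset.mem_filter, Finset.mem_range, Set.mem_setOf_eq],
      Set.ncard_coe_finset]
  -- fiberwise decomposition over critical levels
  set I := Finset.Ico 1 (k+1) ∪ Finset.Ico (n-k) n with hI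
  have hfib : ((Finset.range (n.choose 2)).filter
      (fun t' => H.CritAt k t' ∧ ¬ H.MonoAt A B C t')).card = ∑ v ∈ I, cnt H A B C v := by
    have hmem : ∀ t' ∈ (Finset.range (n.choose 2)).filter
        (fun t' => H.CritAt k t' ∧ ¬ H.MonoAt A B C t'), H.move t' + 1 ∈ I := by
      intro t' ht'
      simp only [Finset.mem_filter, Finset.mem_range] at ht'
      have hlt := H.move_lt t' ht'.1
      rcases ht'.2.1 with hcr | hcr <;>
        · simp only [hI, Finset.mem_union, Finset.mem_Ico]
          omega
    rw [Finset.card_eq_sum_card_fiberwise hmem]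
    apply Finset.sum_congr rfl
    intro v hv
    have hvI : v ≤ k ∨ n - k ≤ v := by
      rcases Finset.mem_union.mp hv with h | h <;> (simp only [Finset.mem_Ico] at h; omega)
    unfold cnt bcount
    rw [Finset.filter_filter, ← Nat.Ico_zero_eq_range]
    congr 1
    apply Finset.filter_congr
    intro t' _
    simp only [Halfperiod.CritAt]
    constructor
    · rintro ⟨⟨-, hm'⟩, he⟩
      exact ⟨he, hm'⟩
    · rintro ⟨he, hm'⟩
      exact ⟨⟨by omega, hm'⟩, he⟩
  have hdisjI : Disjoint (Finset.Ico 1 (k+1)) (Finset.Ico (n-k) n) := by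
    apply Finset.disjoint_left.mpr
    intro a h1 h2
    simp only [Finset.mem_Ico] at h1 h2
    omega
  have hIsum : NcritBi n k H A B C =
      ∑ v ∈ Finset.Ico 1 (k+1), cnt H A B C v + ∑ v ∈ Finset.Ico (n-k) n, cnt H A B C v := by
    rw [hNc, hfib, hI, Finset.sum_union hdisjI]
  -- replace cnt by the min formula on both ranges
  have hc1 : ∑ v ∈ Finset.Ico 1 (k+1), cnt H A B C v
      = ∑ v ∈ Finset.Ico 1 (k+1), min (2*v) (n - v) := by
    apply Finset.sum_congr rfl
    intro v hv
    simp only [Finset.mem_Ico] at hv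
    exact (hpt v (Finset.mem_Ico.mpr (by omega))).symm
  have hc2 : ∑ v ∈ Finset.Ico (n-k) n, cnt H A B C v
      = ∑ v ∈ Finset.Ico (n-k) n, min (2*v) (n - v) := by
    apply Finset.sum_congr rfl
    intro v hv
    simp only [Finset.mem_Ico] at hv
    exact (hpt v (Finset.mem_Ico.mpr (by omega))).symm
  -- the upper range sums to 1 + 2 + ... + k
  have hc2' : ∑ v ∈ Finset.Ico (n-k) n, min (2*v) (n - v)
      = ∑ v ∈ Finset.Ico (n-k) n, (n - v) := by
    apply Finset.sum_congr rfl
    intro v hv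
    simp only [Finset.mem_Ico] at hv
    omega
  have hrefl2 : ∑ v ∈ Finset.Ico (n-k) n, (n - v) = ∑ v ∈ Finset.Ico 1 (k+1), v := by
    have hre := Finset.sum_Ico_reflect (fun j => j) (n-k) (show n ≤ n + 1 by omega)
    rw [hre]
    have ha : n + 1 - n = 1 := by omega
    have hb : n + 1 - (n - k) = k + 1 := by omega
    rw [ha, hb]
  have hS := two_mul_sum_Ico_one (k+1)
  rw [Nat.add_sub_cancel] at hS
  have hchk := two_mul_choose_two (k+1)
  rw [Nat.add_sub_cancel] at hchk
  constructor
  · -- k ≤ m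
    intro hkm
    have hc1' : ∑ v ∈ Finset.Ico 1 (k+1), min (2*v) (n - v)
        = 2 * ∑ v ∈ Finset.Ico 1 (k+1), v := by
      rw [Finset.mul_sum]
      apply Finset.sum_congr rfl
      intro v hv
      simp only [Finset.mem_Ico] at hv
      omega
    rw [hIsum, hc1, hc2, hc1', hc2', hrefl2]
    -- goal: 2*S + S = 3 * (k+1).choose 2
    linarith
  · -- m < k
    intro hkm
    have hsplit1 : ∑ v ∈ Finset.Ico 1 (k+1), min (2*v) (n - v)
        = ∑ v ∈ Finset.Ico 1 (m+1), min (2*v) (n - v)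
        + ∑ v ∈ Finset.Ico (m+1) (k+1), min (2*v) (n - v) := by
      rw [Finset.sum_Ico_consecutive _ (show 1 ≤ m+1 by omega) (show m+1 ≤ k+1 by omega)]
    have hp1 : ∑ v ∈ Finset.Ico 1 (m+1), min (2*v) (n - v)
        = 2 * ∑ v ∈ Finset.Ico 1 (m+1), v := by
      rw [Finset.mul_sum]
      apply Finset.sum_congr rfl
      intro v hv
      simp only [Finset.mem_Ico] at hv
      omega
    have hp2 : ∑ v ∈ Finset.Ico (m+1) (k+1), min (2*v) (n - v)
        = ∑ v ∈ Finset.Ico (m+1) (k+1), (n - v) := by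
      apply Finset.sum_congr rfl
      intro v hv
      simp only [Finset.mem_Ico] at hv
      omega
    have hp2' : ∑ v ∈ Finset.Ico (m+1) (k+1), (n - v) = ∑ v ∈ Finset.Ico (n-k) (2*m), v := by
      have hre := Finset.sum_Ico_reflect (fun j => j) (m+1) (show k+1 ≤ n + 1 by omega)
      rw [hre]
      have ha : n + 1 - (k+1) = n - k := by omega
      have hb : n + 1 - (m+1) = 2*m := by omega
      rw [ha, hb]
    have hcons : ∑ v ∈ Finset.Ico 1 (n-k), v + ∑ v ∈ Finset.Ico (n-k) (2*m), v
        = ∑ v ∈ Finset.Ico 1 (2*m), v := by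
      exact Finset.sum_Ico_consecutive _ (show 1 ≤ n-k by omega) (show n-k ≤ 2*m by omega)
    have hT1 := two_mul_sum_Ico_one (m+1)
    rw [Nat.add_sub_cancel] at hT1
    have hT2 := two_mul_sum_Ico_one (2*m)
    have hT3 := two_mul_sum_Ico_one (n-k)
    have hchm := two_mul_choose_two (m+1)
    rw [Nat.add_sub_cancel] at hchm
    rw [hIsum, hc1, hc2, hsplit1, hp1, hp2, hp2', hc2', hrefl2]
    -- now pure arithmetic
    zify [show 1 ≤ 2*m by omega, show 1 ≤ n - k by omega, show m ≤ k by omega, show k ≤ n by omega] at *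
    have haZ : ((n : ℤ) - k) = 3*m - k := by omega
    have hkey : ((n:ℤ) - k) * ((n:ℤ) - k - 1)
        = 9*(m:ℤ)*m - 6*(m:ℤ)*k + (k:ℤ)*k - 3*(m:ℤ) + k := by
      rw [haZ]; ring
    have hnn : (n : ℤ) = 3*m := by omega
    rw [hnn]
    linarith
end HPAuxFinal

/-- For a 3-decomposable halfperiod on `n` points (with `3 ∣ n`) and `1 ≤ k < n/2`, the number of
bichromatic `(≤ k)`-critical transpositions is `3·C(k+1,2)` when `k ≤ n/3`, and
`3·C(n/3+1,2) + (k − n/3)·n` when `n/3 < k < n/2`. -/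
theorem NcritBi_of_threeDecomposable (n k : ℕ) (hn : 0 < n) (h3 : 3 ∣ n)
    (hk1 : 1 ≤ k) (hk2 : 2 * k < n)
    (H : Halfperiod n) (A B C : Finset (Fin n)) (hdec : H.ThreeDecomp A B C) :
    (k ≤ n / 3 → NcritBi n k H A B C = 3 * (k + 1).choose 2) ∧
    (n / 3 < k → NcritBi n k H A B C = 3 * (n / 3 + 1).choose 2 + (k - n / 3) * n) := by
  exact NcritBi_of_threeDecomposable' n k hn h3 hk1 hk2 H A B C hdec
end HPAux5
end HPAux4
end HPAux3
end

section
/- Let n be a positive integer divisible by 3, let Π be a 3-decomposable halfperiod on n elements with wings A = {a₁,…,a_{n/3}}, B, C, and let k be an integer with n/3 < k < n/2. Let D_k be the digraph on vertex set {1,2,…,n/3} with an arc from i to j if and only if i < j and the transposition exchanging a_i and a_j occurs in the k-center of Π. Then for every vertex i of D_k, its outdegree [i]⁺ and indegree [i]⁻ satisfy [i]⁺ ≤ min{ n − 2k − 1 + [i]⁻ , n/3 − i }. -/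
/-- `DkArc H k i j` holds (for `1 ≤ i < j ≤ n/3`) when the transposition exchanging `a_i` and
`a_j` occurs in the `k`-center of `H`; here `a_i` denotes the element occupying position `i`
(1-based) in the initial ordering, and a transposition between positions `p` and `p+1` (0-based)
occurs in the `k`-center when `k < p + 1 < n − k`. -/
def DkArc {n : ℕ} (H : Halfperiod n) (k i j : ℕ) : Prop :=
  i < j ∧ ∃ t : ℕ, t < n.choose 2 ∧ k < H.move t + 1 ∧ H.move t + 1 < n - k ∧
    ∃ x y : Fin n, (H.pos 0 x : ℕ) = i - 1 ∧ (H.pos 0 y : ℕ) = j - 1 ∧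
      (((H.pos t x : ℕ) = H.move t ∧ (H.pos t y : ℕ) = H.move t + 1) ∨
       ((H.pos t y : ℕ) = H.move t ∧ (H.pos t x : ℕ) = H.move t + 1))

/-- The outdegree of vertex `i` in the digraph `D_k` on vertex set `{1, …, n/3}`. -/
noncomputable def DkOutdeg {n : ℕ} (H : Halfperiod n) (k i : ℕ) : ℕ :=
  Set.ncard {j : ℕ | 1 ≤ j ∧ j ≤ n / 3 ∧ DkArc H k i j}

/-- The indegree of vertex `i` in the digraph `D_k` on vertex set `{1, …, n/3}`. -/
noncomputable def DkIndeg {n : ℕ} (H : Halfperiod n) (k i : ℕ) : ℕ :=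
  Set.ncard {j : ℕ | 1 ≤ j ∧ j ≤ n / 3 ∧ DkArc H k j i}


namespace HPaux

variable {n : ℕ} (H : Halfperiod n)

lemma pos_ne {x y : Fin n} (hxy : x ≠ y) (u : ℕ) : (H.pos u x : ℕ) ≠ (H.pos u y : ℕ) := by
  intro h
  exact hxy ((H.pos u).injective (Fin.val_injective h))

/-- The relative order of `x` and `y` changes at step `u`. -/
def FlipAt (u : ℕ) (x y : Fin n) : Prop :=
  ((H.pos u x : ℕ) < H.pos u y ∧ (H.pos (u+1) y : ℕ) < H.pos (u+1) x) ∨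
  ((H.pos u y : ℕ) < H.pos u x ∧ (H.pos (u+1) x : ℕ) < H.pos (u+1) y)

/-- `x` and `y` occupy the two swapped slots at step `u`. -/
def SwapAt (u : ℕ) (x y : Fin n) : Prop :=
  ((H.pos u x : ℕ) = H.move u ∧ (H.pos u y : ℕ) = H.move u + 1) ∨
  ((H.pos u y : ℕ) = H.move u ∧ (H.pos u x : ℕ) = H.move u + 1)

lemma flip_pos {u : ℕ} (hu : u < n.choose 2) {x y : Fin n}
    (h1 : (H.pos u x : ℕ) < H.pos u y) (h2 : (H.pos (u+1) y : ℕ) < H.pos (u+1) x) :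
    (H.pos u x : ℕ) = H.move u ∧ (H.pos u y : ℕ) = H.move u + 1 := by
  have ex := H.step u hu x
  have ey := H.step u hu y
  split_ifs at ex ey <;> omega

lemma swap_flipAt {u : ℕ} (hu : u < n.choose 2) {x y : Fin n} (h : SwapAt H u x y) :
    FlipAt H u x y := by
  have ex := H.step u hu x
  have ey := H.step u hu y
  unfold SwapAt at h
  unfold FlipAt
  split_ifs at ex ey <;> omega

lemma preserve {x y : Fin n} (hxy : x ≠ y) (h0 : (H.pos 0 x : ℕ) < H.pos 0 y)
    (u : ℕ) (h : ∀ v < u, ¬ FlipAt H v x y) : (H.pos u x : ℕ) < H.pos u y := by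
  induction u with
  | zero => exact h0
  | succ u ih =>
    have hu := ih (fun v hv => h v (Nat.lt_succ_of_lt hv))
    have hnf := h u (Nat.lt_succ_self u)
    have hne := pos_ne H hxy (u+1)
    unfold FlipAt at hnf
    omega

lemma exists_flip_before {x y : Fin n} (hxy : x ≠ y) (h0 : (H.pos 0 x : ℕ) < H.pos 0 y)
    {u : ℕ} (hrev : (H.pos u y : ℕ) < H.pos u x) : ∃ v < u, FlipAt H v x y := by
  by_contra hc
  push_neg at hc
  have := preserve H hxy h0 u hc
  omega

lemma exists_flip {x y : Fin n} (hxy : x ≠ y) (h0 : (H.pos 0 x : ℕ) < H.pos 0 y) :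
    ∃ v < n.choose 2, FlipAt H v x y := by
  apply exists_flip_before H hxy h0
  have hx := H.reverse x
  have hy := H.reverse y
  have := (H.pos 0 y).isLt
  omega

/-- The first step at which the order of `x` and `y` flips. -/
noncomputable def firstFlip (x y : Fin n) : ℕ := sInf {v | FlipAt H v x y}

lemma firstFlip_lt {x y : Fin n} (hxy : x ≠ y) (h0 : (H.pos 0 x : ℕ) < H.pos 0 y) :
    firstFlip H x y < n.choose 2 := by
  obtain ⟨v, hv, hf⟩ := exists_flip H hxy h0
  exact lt_of_le_of_lt (Nat.sInf_le (show v ∈ {v | FlipAt H v x y} from hf)) hv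

lemma firstFlip_flip {x y : Fin n} (hxy : x ≠ y) (h0 : (H.pos 0 x : ℕ) < H.pos 0 y) :
    FlipAt H (firstFlip H x y) x y := by
  obtain ⟨v, hv, hf⟩ := exists_flip H hxy h0
  exact Nat.sInf_mem (⟨v, hf⟩ : {v | FlipAt H v x y}.Nonempty)

lemma firstFlip_pos {x y : Fin n} (hxy : x ≠ y) (h0 : (H.pos 0 x : ℕ) < H.pos 0 y) :
    (H.pos (firstFlip H x y) x : ℕ) = H.move (firstFlip H x y) ∧
    (H.pos (firstFlip H x y) y : ℕ) = H.move (firstFlip H x y) + 1 := by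
  have hord : (H.pos (firstFlip H x y) x : ℕ) < H.pos (firstFlip H x y) y := by
    apply preserve H hxy h0
    intro v hv hfv
    exact absurd (Nat.sInf_le (show v ∈ {v | FlipAt H v x y} from hfv)) (Nat.not_le.2 hv)
  have hf := firstFlip_flip H hxy h0
  rcases hf with ⟨_, h2⟩ | ⟨h1, _⟩
  · exact flip_pos H (firstFlip_lt H hxy h0) hord h2
  · omega

lemma card_P : (Finset.univ.filter fun p : Fin n × Fin n =>
    (H.pos 0 p.1 : ℕ) < H.pos 0 p.2).card = n.choose 2 := by
  classical
  have h2 : ∀ x : Fin n, (Finset.univ.filter fun y : Fin n =>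
      (H.pos 0 x : ℕ) < H.pos 0 y).card = n - 1 - (H.pos 0 x : ℕ) := by
    intro x
    rw [← Fin.card_Ioi (H.pos 0 x)]
    exact Finset.card_equiv (H.pos 0) (fun y => by
      simp only [Finset.mem_filter, Finset.mem_univ, true_and, Finset.mem_Ioi, Fin.lt_def])
  have h1 : (Finset.univ.filter fun p : Fin n × Fin n =>
      (H.pos 0 p.1 : ℕ) < H.pos 0 p.2).card
      = ∑ x : Fin n, (Finset.univ.filter fun y : Fin n =>
        (H.pos 0 x : ℕ) < H.pos 0 y).card := by
    rw [Finset.card_filter, Fintype.sum_prod_type]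
    refine Finset.sum_congr rfl fun x _ => ?_
    rw [Finset.card_filter]
  rw [h1]
  have h3 : ∑ x : Fin n, (Finset.univ.filter fun y : Fin n =>
      (H.pos 0 x : ℕ) < H.pos 0 y).card = ∑ x : Fin n, (n - 1 - (H.pos 0 x : ℕ)) :=
    Finset.sum_congr rfl fun x _ => h2 x
  rw [h3]
  have h4 : ∑ x : Fin n, (n - 1 - (H.pos 0 x : ℕ)) = ∑ z : Fin n, (n - 1 - (z : ℕ)) :=
    Fintype.sum_equiv (H.pos 0) _ _ (fun x => rfl)
  rw [h4, Fin.sum_univ_eq_sum_range (fun j => n - 1 - j) n,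
    Finset.sum_range_reflect (fun j => j) n, Finset.sum_range_id, Nat.choose_two_right]

lemma flip_unique {x y : Fin n} (hxy : x ≠ y) (h0 : (H.pos 0 x : ℕ) < H.pos 0 y)
    {u : ℕ} (hu : u < n.choose 2) (hf : FlipAt H u x y) : u = firstFlip H x y := by
  classical
  set P : Finset (Fin n × Fin n) :=
    Finset.univ.filter (fun p => (H.pos 0 p.1 : ℕ) < H.pos 0 p.2) with hP
  have hmem : ∀ p ∈ P, (H.pos 0 p.1 : ℕ) < H.pos 0 p.2 := fun p hp =>
    (Finset.mem_filter.1 hp).2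
  have hne : ∀ p ∈ P, p.1 ≠ p.2 := by
    intro p hp h
    have := hmem p hp
    rw [h] at this
    omega
  have hlt : ∀ p : {p // p ∈ P}, firstFlip H p.1.1 p.1.2 < n.choose 2 := fun p =>
    firstFlip_lt H (hne _ p.2) (hmem _ p.2)
  let Φ : {p // p ∈ P} → Fin (n.choose 2) := fun p => ⟨firstFlip H p.1.1 p.1.2, hlt p⟩
  have hinj : Function.Injective Φ := by
    intro p q h
    have hp := firstFlip_pos H (hne _ p.2) (hmem _ p.2)
    have hq := firstFlip_pos H (hne _ q.2) (hmem _ q.2)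
    have huv : firstFlip H p.1.1 p.1.2 = firstFlip H q.1.1 q.1.2 := congrArg Fin.val h
    rw [← huv] at hq
    have e1 : p.1.1 = q.1.1 :=
      (H.pos (firstFlip H p.1.1 p.1.2)).injective (Fin.val_injective (by omega))
    have e2 : p.1.2 = q.1.2 :=
      (H.pos (firstFlip H p.1.1 p.1.2)).injective (Fin.val_injective (by omega))
    exact Subtype.ext (Prod.ext e1 e2)
  have hsurj : Function.Surjective Φ := by
    have hcard : Fintype.card {p // p ∈ P} = Fintype.card (Fin (n.choose 2)) := by
      rw [Fintype.card_coe, Fintype.card_fin, hP, card_P H]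
    exact ((Fintype.bijective_iff_injective_and_card Φ).2 ⟨hinj, hcard⟩).2
  obtain ⟨p, hp⟩ := hsurj ⟨u, hu⟩
  have hup : u = firstFlip H p.1.1 p.1.2 := (congrArg Fin.val hp).symm
  have hpp := firstFlip_pos H (hne _ p.2) (hmem _ p.2)
  rw [← hup] at hpp
  rcases hf with ⟨ho1, ho2⟩ | ⟨ho1, ho2⟩
  · have hxy' := flip_pos H hu ho1 ho2
    have ex : x = p.1.1 := (H.pos u).injective (Fin.val_injective (by omega))
    have ey : y = p.1.2 := (H.pos u).injective (Fin.val_injective (by omega))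
    rw [hup, ex, ey]
  · have hxy' := flip_pos H hu ho1 ho2
    have ey : y = p.1.1 := (H.pos u).injective (Fin.val_injective (by omega))
    have ex : x = p.1.2 := (H.pos u).injective (Fin.val_injective (by omega))
    have hqq := hmem _ p.2
    rw [← ey, ← ex] at hqq
    omega

lemma left_at_swap {x y : Fin n} (h0 : (H.pos 0 x : ℕ) < H.pos 0 y) {u : ℕ}
    (hu : u < n.choose 2) (hsw : SwapAt H u x y) :
    (H.pos u x : ℕ) = H.move u ∧ (H.pos u y : ℕ) = H.move u + 1 := by
  have hxy : x ≠ y := by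
    intro h
    rw [h] at h0
    omega
  rw [flip_unique H hxy h0 hu (swap_flipAt H hu hsw)]
  exact firstFlip_pos H hxy h0

lemma swap_eq {x y : Fin n} (h0 : (H.pos 0 x : ℕ) < H.pos 0 y) {u u' : ℕ}
    (hu : u < n.choose 2) (hu' : u' < n.choose 2)
    (hs : SwapAt H u x y) (hs' : SwapAt H u' x y) : u = u' := by
  have hxy : x ≠ y := by
    intro h
    rw [h] at h0
    omega
  rw [flip_unique H hxy h0 hu (swap_flipAt H hu hs),
    flip_unique H hxy h0 hu' (swap_flipAt H hu' hs')]

lemma cross (f : ℕ → ℕ) (N : ℕ) (hstep : ∀ u < N, f (u+1) ≤ f u + 1 ∧ f u ≤ f (u+1) + 1)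
    (q : ℕ) (h0 : f 0 ≤ q) (hN : q < f N) :
    ((Finset.range N).filter fun u => f u = q ∧ f (u+1) = q + 1).card =
    ((Finset.range N).filter fun u => f u = q + 1 ∧ f (u+1) = q).card + 1 := by
  classical
  have tele := Finset.sum_range_sub' (fun u => if f u ≤ q then (1:ℤ) else 0) N
  have key : ∀ u ∈ Finset.range N,
      ((if f u ≤ q then (1:ℤ) else 0) - (if f (u+1) ≤ q then (1:ℤ) else 0))
      = (if f u = q ∧ f (u+1) = q + 1 then (1:ℤ) else 0)
        - (if f u = q + 1 ∧ f (u+1) = q then (1:ℤ) else 0) := by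
    intro u hu
    have := hstep u (Finset.mem_range.1 hu)
    split_ifs <;> omega
  rw [Finset.sum_congr rfl key, Finset.sum_sub_distrib,
    Finset.sum_boole, Finset.sum_boole, if_pos h0, if_neg (by omega)] at tele
  omega

end HPaux


open Classical in
/-- Auxiliary choice function: a witnessing step for the arc `(i, j)`. -/
noncomputable def phi {n : ℕ} (H : Halfperiod n) (k i : ℕ) : ℕ → ℕ :=
  fun j => if h : DkArc H k i j then h.2.choose else 0

lemma phi_eq {n : ℕ} (H : Halfperiod n) {k i j : ℕ} (h : DkArc H k i j) :
    phi H k i j = h.2.choose := dif_pos h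

open Classical in
/-- Auxiliary function: (1-based) initial position of the element at slot `move u` at time `u`. -/
noncomputable def psi {n : ℕ} (H : Halfperiod n) : ℕ → ℕ :=
  fun u => if h : H.move u + 1 < n then
    ((H.pos 0 ((H.pos u).symm ⟨H.move u, Nat.lt_of_succ_lt h⟩) : ℕ) + 1) else 0

lemma psi_eq {n : ℕ} (H : Halfperiod n) {u : ℕ} (h : H.move u + 1 < n) :
    psi H u = (H.pos 0 ((H.pos u).symm ⟨H.move u, Nat.lt_of_succ_lt h⟩) : ℕ) + 1 := dif_pos h

/-- For a 3-decomposable halfperiod on `n` points (with `3 ∣ n`) and `n/3 < k < n/2`, every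
vertex `i` of the digraph `D_k` satisfies `outdeg(i) ≤ min(n − 2k − 1 + indeg(i), n/3 − i)`. -/
theorem DkOutdeg_le (n k : ℕ) (hn : 0 < n) (h3 : 3 ∣ n)
    (hk1 : n / 3 < k) (hk2 : 2 * k < n)
    (H : Halfperiod n) (A B C : Finset (Fin n)) (hdec : H.ThreeDecomp A B C) :
    ∀ i : ℕ, 1 ≤ i → i ≤ n / 3 →
      DkOutdeg H k i ≤ min (n - 2 * k - 1 + DkIndeg H k i) (n / 3 - i) := by
  classical
  intro i hi1 hi2
  have hd3 : n / 3 ≤ n := Nat.div_le_self n 3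
  have hiN : i - 1 < n := by omega
  set a : Fin n := (H.pos 0).symm ⟨i - 1, hiN⟩ with ha
  have hf0 : (H.pos 0 a : ℕ) = i - 1 := by rw [ha]; simp
  have hfN : (H.pos (n.choose 2) a : ℕ) = n - 1 - (i - 1) := by rw [H.reverse a, hf0]
  have hstep : ∀ u < n.choose 2,
      (H.pos (u+1) a : ℕ) ≤ (H.pos u a : ℕ) + 1 ∧
      (H.pos u a : ℕ) ≤ (H.pos (u+1) a : ℕ) + 1 := by
    intro u hu
    have := H.step u hu a
    split_ifs at this <;> omega
  set Ubig : Finset ℕ := (Finset.range (n.choose 2)).filter fun u =>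
    k ≤ (H.pos u a : ℕ) ∧ (H.pos u a : ℕ) < n - k - 1 ∧
    (H.pos (u+1) a : ℕ) = (H.pos u a : ℕ) + 1 with hUbig
  set Dbig : Finset ℕ := (Finset.range (n.choose 2)).filter fun u =>
    k ≤ (H.pos (u+1) a : ℕ) ∧ (H.pos (u+1) a : ℕ) < n - k - 1 ∧
    (H.pos u a : ℕ) = (H.pos (u+1) a : ℕ) + 1 with hDbig
  -- Ubig and Dbig decompose as disjoint unions over the window
  have hUdecomp : Ubig = (Finset.Ico k (n - k - 1)).biUnion fun q =>
      (Finset.range (n.choose 2)).filter fun u =>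
        (H.pos u a : ℕ) = q ∧ (H.pos (u+1) a : ℕ) = q + 1 := by
    ext u
    simp only [hUbig, Finset.mem_filter, Finset.mem_range, Finset.mem_biUnion, Finset.mem_Ico]
    constructor
    · rintro ⟨hu, h1, h2, h3'⟩
      exact ⟨(H.pos u a : ℕ), ⟨h1, h2⟩, hu, rfl, h3'⟩
    · rintro ⟨q, ⟨h1, h2⟩, hu, h3', h4⟩
      omega
  have hDdecomp : Dbig = (Finset.Ico k (n - k - 1)).biUnion fun q =>
      (Finset.range (n.choose 2)).filter fun u =>
        (H.pos u a : ℕ) = q + 1 ∧ (H.pos (u+1) a : ℕ) = q := by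
    ext u
    simp only [hDbig, Finset.mem_filter, Finset.mem_range, Finset.mem_biUnion, Finset.mem_Ico]
    constructor
    · rintro ⟨hu, h1, h2, h3'⟩
      exact ⟨(H.pos (u+1) a : ℕ), ⟨h1, h2⟩, hu, h3', rfl⟩
    · rintro ⟨q, ⟨h1, h2⟩, hu, h3', h4⟩
      omega
  have hUcard : Ubig.card = ∑ q ∈ Finset.Ico k (n - k - 1),
      ((Finset.range (n.choose 2)).filter fun u =>
        (H.pos u a : ℕ) = q ∧ (H.pos (u+1) a : ℕ) = q + 1).card := by
    rw [hUdecomp]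
    apply Finset.card_biUnion
    intro q hq q' hq' hne
    refine Finset.disjoint_left.2 fun u hu hu' => hne ?_
    simp only [Finset.mem_filter] at hu hu'
    omega
  have hDcard : Dbig.card = ∑ q ∈ Finset.Ico k (n - k - 1),
      ((Finset.range (n.choose 2)).filter fun u =>
        (H.pos u a : ℕ) = q + 1 ∧ (H.pos (u+1) a : ℕ) = q).card := by
    rw [hDdecomp]
    apply Finset.card_biUnion
    intro q hq q' hq' hne
    refine Finset.disjoint_left.2 fun u hu hu' => hne ?_
    simp only [Finset.mem_filter] at hu hu'
    omega
  have hcross : ∀ q ∈ Finset.Ico k (n - k - 1),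
      ((Finset.range (n.choose 2)).filter fun u =>
        (H.pos u a : ℕ) = q ∧ (H.pos (u+1) a : ℕ) = q + 1).card =
      ((Finset.range (n.choose 2)).filter fun u =>
        (H.pos u a : ℕ) = q + 1 ∧ (H.pos (u+1) a : ℕ) = q).card + 1 := by
    intro q hq
    rw [Finset.mem_Ico] at hq
    exact HPaux.cross (fun u => (H.pos u a : ℕ)) (n.choose 2) hstep q
      (by show (H.pos 0 a : ℕ) ≤ q; omega)
      (by show q < (H.pos (n.choose 2) a : ℕ); omega)
  have hUD : Ubig.card = Dbig.card + (n - 2 * k - 1) := by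
    rw [hUcard, hDcard, Finset.sum_congr rfl hcross, Finset.sum_add_distrib,
      Finset.sum_const, smul_eq_mul, mul_one, Nat.card_Ico]
    congr 1
    omega
  -- Outdegree is at most the number of up-moves inside the window
  have hφ : ∀ j : ℕ, DkArc H k i j → phi H k i j ∈ Ubig ∧
      ∃ y : Fin n, (H.pos 0 y : ℕ) = j - 1 ∧
        (H.pos (phi H k i j) y : ℕ) = H.move (phi H k i j) + 1 := by
    intro j hj
    have hφj : phi H k i j = hj.2.choose := phi_eq H hj
    obtain ⟨htN, hcl, hcr, x, y, hx0, hy0, hor⟩ := hj.2.choose_spec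
    set t := hj.2.choose with ht
    have hxa : x = a := by
      apply (H.pos 0).injective
      apply Fin.val_injective
      rw [hx0, hf0]
    rw [hxa] at hor
    have hij : i < j := hj.1
    have h0y : (H.pos 0 a : ℕ) < (H.pos 0 y : ℕ) := by omega
    have hleft := HPaux.left_at_swap H h0y htN hor
    have hstept := H.step t htN a
    have h1 : (H.pos (t+1) a : ℕ) = H.move t + 1 := by split_ifs at hstept <;> omega
    rw [hφj]
    constructor
    · simp only [hUbig, Finset.mem_filter, Finset.mem_range]
      exact ⟨htN, by omega, by omega, by omega⟩
    · exact ⟨y, hy0, hleft.2⟩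
  have houtU : DkOutdeg H k i ≤ Ubig.card := by
    have hmaps : ∀ j ∈ {j : ℕ | 1 ≤ j ∧ j ≤ n / 3 ∧ DkArc H k i j},
        phi H k i j ∈ (↑Ubig : Set ℕ) := fun j hj => (hφ j hj.2.2).1
    have hinj : Set.InjOn (phi H k i) {j : ℕ | 1 ≤ j ∧ j ≤ n / 3 ∧ DkArc H k i j} := by
      intro j hj j' hj' he
      obtain ⟨_, y, hy0, hyt⟩ := hφ j hj.2.2
      obtain ⟨_, y', hy0', hyt'⟩ := hφ j' hj'.2.2
      rw [he] at hyt
      have hyy : y = y' := (H.pos (phi H k i j')).injective (Fin.val_injective (by omega))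
      rw [hyy, hy0'] at hy0
      have h1 := hj.1
      have h1' := hj'.1
      omega
    calc DkOutdeg H k i = Set.ncard {j : ℕ | 1 ≤ j ∧ j ≤ n / 3 ∧ DkArc H k i j} := rfl
      _ ≤ (↑Ubig : Set ℕ).ncard :=
          Set.ncard_le_ncard_of_injOn (phi H k i) hmaps hinj Ubig.finite_toSet
      _ = Ubig.card := Set.ncard_coe_finset _
  -- Down-moves inside the window are counted by the indegree
  have hψ : ∀ u ∈ Dbig, (psi H u ∈ {j : ℕ | 1 ≤ j ∧ j ≤ n / 3 ∧ DkArc H k j i} ∧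
      ∃ y : Fin n, (H.pos 0 y : ℕ) = psi H u - 1 ∧ HPaux.SwapAt H u y a) := by
    intro u hu
    rw [hDbig, Finset.mem_filter, Finset.mem_range] at hu
    obtain ⟨huN, hb1, hb2, hb3⟩ := hu
    have hm : H.move u + 1 < n := H.move_lt u huN
    have hstepu := H.step u huN a
    have hfu : (H.pos u a : ℕ) = H.move u + 1 := by split_ifs at hstepu <;> omega
    have hfu1 : (H.pos (u+1) a : ℕ) = H.move u := by split_ifs at hstepu <;> omega
    set y : Fin n := (H.pos u).symm ⟨H.move u, Nat.lt_of_succ_lt hm⟩ with hy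
    have hyu : (H.pos u y : ℕ) = H.move u := by rw [hy]; simp
    have hsw : HPaux.SwapAt H u y a := Or.inl ⟨hyu, hfu⟩
    have hya : y ≠ a := by
      intro hh
      rw [hh] at hyu
      omega
    have h0ya : (H.pos 0 y : ℕ) < (H.pos 0 a : ℕ) := by
      rcases Nat.lt_or_ge (H.pos 0 y : ℕ) (H.pos 0 a : ℕ) with h | h
      · exact h
      · exfalso
        have hne := HPaux.pos_ne H hya 0
        have h0ay : (H.pos 0 a : ℕ) < (H.pos 0 y : ℕ) := by omega
        have := HPaux.left_at_swap H h0ay huN (Or.inr ⟨hyu, hfu⟩)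
        omega
    have hψu : psi H u = (H.pos 0 y : ℕ) + 1 := psi_eq H hm
    have harc : DkArc H k (psi H u) i := by
      refine ⟨by omega, u, huN, by omega, by omega, y, a, by omega, hf0, Or.inl ⟨hyu, hfu⟩⟩
    exact ⟨⟨by omega, by omega, harc⟩, y, by omega, hsw⟩
  have hinD : Dbig.card ≤ DkIndeg H k i := by
    have hmaps : ∀ u ∈ (↑Dbig : Set ℕ),
        psi H u ∈ {j : ℕ | 1 ≤ j ∧ j ≤ n / 3 ∧ DkArc H k j i} :=
      fun u hu => (hψ u (Finset.mem_coe.1 hu)).1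
    have hinj : Set.InjOn (psi H) (↑Dbig : Set ℕ) := by
      intro u hu u' hu' he
      obtain ⟨hmem, y, hy0, hsw⟩ := hψ u (Finset.mem_coe.1 hu)
      obtain ⟨hmem', y', hy0', hsw'⟩ := hψ u' (Finset.mem_coe.1 hu')
      have h1 := hmem.1
      have hlt := hmem.2.2.1
      have hyy : y = y' := by
        apply (H.pos 0).injective
        apply Fin.val_injective
        omega
      have h0 : (H.pos 0 y : ℕ) < (H.pos 0 a : ℕ) := by omega
      have huN : u < n.choose 2 := by
        have := Finset.mem_coe.1 hu
        rw [hDbig, Finset.mem_filter, Finset.mem_range] at this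
        exact this.1
      have huN' : u' < n.choose 2 := by
        have := Finset.mem_coe.1 hu'
        rw [hDbig, Finset.mem_filter, Finset.mem_range] at this
        exact this.1
      exact HPaux.swap_eq H h0 huN huN' hsw (hyy ▸ hsw')
    calc Dbig.card = (↑Dbig : Set ℕ).ncard := (Set.ncard_coe_finset _).symm
      _ ≤ Set.ncard {j : ℕ | 1 ≤ j ∧ j ≤ n / 3 ∧ DkArc H k j i} :=
          Set.ncard_le_ncard_of_injOn (psi H) hmaps hinj
            (Set.Finite.subset (Set.finite_Iic (n / 3)) fun j hj => hj.2.1)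
      _ = DkIndeg H k i := rfl
  refine le_min ?_ ?_
  · omega
  · have hsub : {j : ℕ | 1 ≤ j ∧ j ≤ n / 3 ∧ DkArc H k i j} ⊆ Set.Ioc i (n / 3) :=
      fun j hj => ⟨hj.2.2.1, hj.2.1⟩
    calc DkOutdeg H k i ≤ (Set.Ioc i (n / 3)).ncard :=
          Set.ncard_le_ncard hsub (Set.finite_Ioc i (n / 3))
      _ = n / 3 - i := by rw [← Finset.coe_Ioc, Set.ncard_coe_finset, Nat.card_Ioc]
end

section
/- Let n be a positive integer divisible by 3 and let k be an integer with n/3 < k < n/2; set v := n/3 and m := n−2k−1. Then the number of arcs of the digraph D₀(v,m) equals E(k,n) := 2m²·binom(S_m(v),3) + binom(m,2)·binom(S_m(v),2) + 2m·T_m(v)·binom(S_m(v),2) + binom(T_m(v),2)·S_m(v) + (U_m(v)+1)·( m·(S_m(v)−1) + T_m(v) ). -/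
def aafn (m w : ℕ) : ℕ := 1 + m * (w / m).choose 2 + (w / m) * (w % m)

def fffn (m i : ℕ) : ℕ := m + Nat.findGreatest (fun c => aafn m (m + c) ≤ i) i

lemma two_choose2 (n : ℕ) : 2 * ((n.choose 2 : ℤ)) = n * ((n : ℤ) - 1) := by
  induction n with
  | zero => simp
  | succ k ih =>
      rw [Nat.choose_succ_succ, Nat.choose_one_right]
      push_cast
      push_cast at ih
      linear_combination ih

lemma six_choose3 (n : ℕ) : 6 * ((n.choose 3 : ℤ)) = n * ((n : ℤ) - 1) * ((n : ℤ) - 2) := by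
  induction n with
  | zero => simp
  | succ k ih =>
      rw [Nat.choose_succ_succ]
      push_cast
      push_cast at ih
      linear_combination ih + 3 * two_choose2 k

lemma aafn_val {m : ℕ} (hm : 0 < m) (s t : ℕ) (ht : t ≤ m) :
    aafn m (m * s + t) = 1 + m * s.choose 2 + s * t := by
  rcases eq_or_lt_of_le ht with h | h
  · rw [h]
    have h1 : m * s + m = m * (s + 1) := by ring
    rw [h1]
    unfold aafn
    rw [Nat.mul_div_cancel_left _ hm, Nat.mul_mod_right]
    rw [Nat.choose_succ_succ, Nat.choose_one_right]
    ring
  · unfold aafn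
    rw [Nat.mul_add_div hm, Nat.mul_add_mod, Nat.div_eq_of_lt h, Nat.mod_eq_of_lt h]
    simp

lemma choose2_succ (n : ℕ) : (n + 1).choose 2 = n.choose 2 + n := by
  show n.choose 1 + n.choose 2 = _
  rw [Nat.choose_one_right]; omega

lemma choose3_succ (n : ℕ) : (n + 1).choose 3 = n.choose 3 + n.choose 2 := by
  show n.choose 2 + n.choose 3 = _
  omega

lemma aafn_mono {m : ℕ} (hm : 0 < m) {w w' : ℕ} (hw : m ≤ w) (hww : w ≤ w') :
    aafn m w ≤ aafn m w' := by
  have hsle : w / m ≤ w' / m := Nat.div_le_div_right hww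
  have hw1 : w = m * (w / m) + w % m := (Nat.div_add_mod w m).symm
  have hw2 : w' = m * (w' / m) + w' % m := (Nat.div_add_mod w' m).symm
  have htw : w % m < m := Nat.mod_lt _ hm
  have htw' : w' % m < m := Nat.mod_lt _ hm
  rcases eq_or_lt_of_le hsle with h | h
  · rw [h] at hw1
    have hmod : w % m ≤ w' % m := by omega
    have hmul := Nat.mul_le_mul_left (w' / m) hmod
    unfold aafn
    rw [h]
    omega
  · have hcle : (w / m + 1).choose 2 ≤ (w' / m).choose 2 := Nat.choose_le_choose 2 h
    rw [choose2_succ] at hcle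
    have h2 := Nat.mul_le_mul_left m hcle
    rw [Nat.mul_add] at h2
    have h1 : (w / m) * (w % m) ≤ (w / m) * m := Nat.mul_le_mul_left _ htw.le
    have h3 : (w / m) * m = m * (w / m) := Nat.mul_comm _ _
    unfold aafn
    have h4 : (0:ℕ) ≤ (w' / m) * (w' % m) := Nat.zero_le _
    omega

lemma aafn_lb {m : ℕ} (hm : 0 < m) {w : ℕ} (hw : m ≤ w) : w + 1 ≤ aafn m w + m := by
  obtain ⟨r, hr⟩ : ∃ r, w / m = r + 1 := by
    have : 1 ≤ w / m := (Nat.one_le_div_iff hm).mpr hw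
    exact ⟨w / m - 1, by omega⟩
  have hw1 : w = m * (w / m) + w % m := (Nat.div_add_mod w m).symm
  rw [hr] at hw1
  have e1 : m * (r + 1) = m * r + m := by ring
  have h1 : r ≤ (r + 1).choose 2 := by rw [choose2_succ]; omega
  have h2 : m * r ≤ m * (r + 1).choose 2 := Nat.mul_le_mul_left _ h1
  have h3 : 1 * (w % m) ≤ (r + 1) * (w % m) := Nat.mul_le_mul_right _ (by omega)
  unfold aafn
  rw [hr]
  omega

lemma aafn_rec {m : ℕ} (hm : 0 < m) {d : ℕ} (hd : m ≤ d) :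
    aafn m (m + d) = aafn m d + d := by
  have hw1 : d = m * (d / m) + d % m := (Nat.div_add_mod d m).symm
  have htw : d % m < m := Nat.mod_lt _ hm
  have e0 : m * (d / m + 1) = m * (d / m) + m := by ring
  have e1 : m + d = m * (d / m + 1) + d % m := by omega
  rw [e1, aafn_val hm _ _ htw.le]
  conv_rhs => rw [hw1, aafn_val hm _ _ htw.le]
  rw [choose2_succ]
  have e2 : m * ((d/m).choose 2 + d/m) = m * (d/m).choose 2 + m * (d/m) := by ring
  have e3 : (d/m + 1) * (d % m) = (d/m) * (d % m) + d % m := by ring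
  omega

lemma fffn_ge (m i : ℕ) : m ≤ fffn m i := Nat.le_add_right _ _

lemma aafn_self {m : ℕ} (hm : 0 < m) : aafn m m = 1 := by
  have h := aafn_val hm 1 0 (by omega)
  simpa using h

lemma fffn_galois {m : ℕ} (hm : 0 < m) {i : ℕ} (hi : 1 ≤ i) (c : ℕ) :
    m + c ≤ fffn m i ↔ aafn m (m + c) ≤ i := by
  unfold fffn
  have hP0 : aafn m (m + 0) ≤ i := by simpa [aafn_self hm] using hi
  constructor
  · intro h
    have hc : c ≤ Nat.findGreatest (fun c => aafn m (m + c) ≤ i) i := by omega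
    have hspec : aafn m (m + Nat.findGreatest (fun c => aafn m (m + c) ≤ i) i) ≤ i :=
      Nat.findGreatest_spec (P := fun c => aafn m (m + c) ≤ i) (Nat.zero_le i) hP0
    calc aafn m (m + c) ≤ aafn m (m + Nat.findGreatest (fun c => aafn m (m + c) ≤ i) i) :=
          aafn_mono hm (Nat.le_add_right _ _) (by omega)
      _ ≤ i := hspec
  · intro h
    have hci : c ≤ i := by
      have := aafn_lb hm (Nat.le_add_right m c)
      omega
    have hle : c ≤ Nat.findGreatest (fun c => aafn m (m + c) ≤ i) i :=
      Nat.le_findGreatest hci h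
    omega

lemma fffn_lt {m : ℕ} (hm : 0 < m) {i : ℕ} (hi : 1 ≤ i) : fffn m i + 1 ≤ m + i := by
  have h1 : m + (fffn m i - m) ≤ fffn m i := by have := fffn_ge m i; omega
  have h2 : aafn m (fffn m i) ≤ i := by
    have := (fffn_galois hm hi (fffn m i - m)).mp (by omega)
    have e : m + (fffn m i - m) = fffn m i := by have := fffn_ge m i; omega
    rwa [e] at this
  have := aafn_lb hm (fffn_ge m i)
  omega

lemma fffn_key {m : ℕ} (hm : 0 < m) {d j : ℕ} (hd : 1 ≤ d) (hdj : d < j) :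
    d ≤ fffn m (j - d) ↔ m + d ≤ fffn m j := by
  have hj1 : 1 ≤ j := by omega
  have hjd1 : 1 ≤ j - d := by omega
  rcases le_or_gt d m with h | h
  · constructor
    · intro _
      rw [fffn_galois hm hj1]
      have e : m + d = m * 1 + d := by omega
      rw [e, aafn_val hm 1 d h]
      rw [Nat.choose_eq_zero_of_lt (by omega)]
      omega
    · intro _
      exact le_trans h (fffn_ge m _)
  · have e1 : d ≤ fffn m (j - d) ↔ aafn m d ≤ j - d := by
      have := fffn_galois hm hjd1 (d - m)
      have e : m + (d - m) = d := by omega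
      rw [e] at this
      constructor
      · intro hh; exact this.mp (by omega)
      · intro hh; have := this.mpr hh; omega
    rw [e1, fffn_galois hm hj1, aafn_rec hm h.le]
    omega

/-- The outdegree of vertex `i` in the digraph `D₀(v,m)` on vertices `1, …, v`:
`outdeg(i) = min(indeg(i) + m, v − i)`, where `indeg(i)` is the number of vertices
`i' < i` with an arc to `i`, i.e. with `i ≤ i' + outdeg(i')`. -/
def D0outdeg (v m : ℕ) (i : ℕ) : ℕ :=
  min ((Finset.filter
        (fun i' : Fin i => 1 ≤ (i' : ℕ) ∧ i ≤ (i' : ℕ) + D0outdeg v m (i' : ℕ))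
        Finset.univ).card + m) (v - i)
  termination_by i
  decreasing_by
    simp_wf
    exact Fin.is_lt _

/-- The number of arcs of the digraph `D₀(v,m)`: there is an arc from `i` to `j`
(for `1 ≤ i < j ≤ v`) if and only if `j ≤ i + outdeg(i)`. -/
def D0arcs (v m : ℕ) : ℕ :=
  ((Finset.Icc 1 v ×ˢ Finset.Icc 1 v).filter
    (fun p => p.1 < p.2 ∧ p.2 ≤ p.1 + D0outdeg v m p.1)).card

lemma indeg_card {m : ℕ} (hm : 0 < m) {j : ℕ} (hj : 1 ≤ j) :
    ((Finset.Icc 1 (j - 1)).filter (fun i => j ≤ i + fffn m i)).card + m = fffn m j := by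
  have hfl := fffn_lt hm hj
  have hfg := fffn_ge m j
  have hset : (Finset.Icc 1 (j - 1)).filter (fun i => j ≤ i + fffn m i)
      = Finset.Icc (j + m - fffn m j) (j - 1) := by
    ext x
    simp only [Finset.mem_filter, Finset.mem_Icc]
    constructor
    · rintro ⟨⟨hx1, hx2⟩, hx3⟩
      have hkey := (fffn_key hm (d := j - x) (j := j) (by omega) (by omega)).mp
        (by have e : j - (j - x) = x := by omega
            rw [e]; omega)
      omega
    · rintro ⟨hx1, hx2⟩
      have hkey := (fffn_key hm (d := j - x) (j := j) (by omega) (by omega)).mpr (by omega)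
      have e : j - (j - x) = x := by omega
      rw [e] at hkey
      refine ⟨⟨by omega, hx2⟩, by omega⟩
  rw [hset, Nat.card_Icc]
  omega

lemma outdeg_eq {m : ℕ} (hm : 0 < m) (v : ℕ) :
    ∀ i, 1 ≤ i → i ≤ v → D0outdeg v m i = min (fffn m i) (v - i) := by
  intro i
  induction i using Nat.strong_induction_on with
  | _ i ih =>
    intro hi1 hiv
    rw [D0outdeg]
    have hcard : (Finset.filter
        (fun i' : Fin i => 1 ≤ (i' : ℕ) ∧ i ≤ (i' : ℕ) + D0outdeg v m (i' : ℕ))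
        Finset.univ).card
        = ((Finset.Icc 1 (i - 1)).filter (fun x => i ≤ x + fffn m x)).card := by
      rw [Finset.card_filter, Finset.card_filter]
      rw [Fin.sum_univ_eq_sum_range
        (fun x => if 1 ≤ x ∧ i ≤ x + D0outdeg v m x then 1 else 0) i]
      have hcong : ∀ x ∈ Finset.range i,
          (if 1 ≤ x ∧ i ≤ x + D0outdeg v m x then (1:ℕ) else 0)
          = if 1 ≤ x ∧ x ≤ i - 1 ∧ i ≤ x + fffn m x then 1 else 0 := by
        intro x hx
        rw [Finset.mem_range] at hx
        by_cases h1 : 1 ≤ x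
        · rw [ih x hx h1 (by omega)]
          have hc : (i ≤ x + min (fffn m x) (v - x)) ↔ (i ≤ x + fffn m x) := by omega
          by_cases h2 : i ≤ x + fffn m x
          · rw [if_pos ⟨h1, hc.mpr h2⟩, if_pos ⟨h1, by omega, h2⟩]
          · rw [if_neg (by tauto), if_neg (by tauto)]
        · rw [if_neg (by tauto), if_neg (by tauto)]
      rw [Finset.sum_congr rfl hcong]
      rw [← Finset.card_filter, ← Finset.card_filter]
      congr 1
      ext y
      simp only [Finset.mem_filter, Finset.mem_Icc, Finset.mem_range]
      omega
    rw [hcard, indeg_card hm hi1]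

lemma arcs_eq_sum {m : ℕ} (hm : 0 < m) (v : ℕ) :
    D0arcs v m = ∑ j ∈ Finset.Icc 1 v, (fffn m j - m) := by
  unfold D0arcs
  have hfc : (Finset.Icc 1 v ×ˢ Finset.Icc 1 v).filter
      (fun p => p.1 < p.2 ∧ p.2 ≤ p.1 + D0outdeg v m p.1)
      = (Finset.Icc 1 v ×ˢ Finset.Icc 1 v).filter
      (fun p => p.1 < p.2 ∧ p.2 ≤ p.1 + fffn m p.1) := by
    apply Finset.filter_congr
    intro p hp
    rw [Finset.mem_product, Finset.mem_Icc, Finset.mem_Icc] at hp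
    obtain ⟨⟨h1, h2⟩, h3, h4⟩ := hp
    rw [outdeg_eq hm v p.1 h1 h2]
    constructor <;> rintro ⟨ha, hb⟩ <;> exact ⟨ha, by omega⟩
  rw [hfc]
  rw [Finset.card_eq_sum_card_fiberwise
    (f := fun p : ℕ × ℕ => p.2) (t := Finset.Icc 1 v)
    (by intro p hp
        rw [Finset.mem_coe, Finset.mem_filter, Finset.mem_product] at hp
        exact Finset.mem_coe.mpr hp.1.2)]
  apply Finset.sum_congr rfl
  intro j hj
  rw [Finset.mem_Icc] at hj
  have hcard : (((Finset.Icc 1 v ×ˢ Finset.Icc 1 v).filter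
      (fun p => p.1 < p.2 ∧ p.2 ≤ p.1 + fffn m p.1)).filter
      (fun p => p.2 = j)).card
      = ((Finset.Icc 1 (j - 1)).filter (fun x => j ≤ x + fffn m x)).card := by
    apply Finset.card_bij (fun p _ => p.1)
    · rintro p hp
      simp only [Finset.mem_filter, Finset.mem_product, Finset.mem_Icc] at hp ⊢
      obtain ⟨⟨⟨⟨ha1, ha2⟩, _⟩, hb1, hb2⟩, hc⟩ := hp
      subst hc
      exact ⟨⟨ha1, by omega⟩, hb2⟩
    · rintro p hp q hq hpq
      simp only [Finset.mem_filter] at hp hq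
      exact Prod.ext hpq (hp.2.trans hq.2.symm)
    · intro x hx
      simp only [Finset.mem_filter, Finset.mem_Icc] at hx
      obtain ⟨⟨hx1, hx2⟩, hx3⟩ := hx
      refine ⟨(x, j), ?_, rfl⟩
      simp only [Finset.mem_filter, Finset.mem_product, Finset.mem_Icc]
      exact ⟨⟨⟨⟨hx1, by omega⟩, by omega, hj.2⟩, by omega, hx3⟩, trivial⟩
  rw [hcard]
  have := indeg_card hm (hj.1) (m := m)
  omega

lemma sum_to_w {m : ℕ} (hm : 0 < m) {v : ℕ} (hv : 1 ≤ v) :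
    ∑ j ∈ Finset.Icc 1 v, (fffn m j - m)
      = ∑ w ∈ Finset.Ioc m (m + v), (Finset.Icc (aafn m w) v).card := by
  have step1 : ∀ j ∈ Finset.Icc 1 v, fffn m j - m
      = ((Finset.Ioc m (m + v)).filter (fun w => aafn m w ≤ j)).card := by
    intro j hj
    rw [Finset.mem_Icc] at hj
    have hset : (Finset.Ioc m (m + v)).filter (fun w => aafn m w ≤ j)
        = Finset.Ioc m (fffn m j) := by
      ext w
      simp only [Finset.mem_filter, Finset.mem_Ioc]
      constructor
      · rintro ⟨⟨hw1, hw2⟩, hw3⟩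
        refine ⟨hw1, ?_⟩
        have := (fffn_galois hm hj.1 (w - m)).mpr (by rwa [show m + (w - m) = w by omega])
        omega
      · rintro ⟨hw1, hw2⟩
        have hg := (fffn_galois hm hj.1 (w - m)).mp (by omega)
        rw [show m + (w - m) = w by omega] at hg
        have := fffn_lt hm hj.1 (m := m)
        exact ⟨⟨hw1, by omega⟩, hg⟩
    rw [hset, Nat.card_Ioc]
  rw [Finset.sum_congr rfl step1]
  have step2 : ∀ j ∈ Finset.Icc 1 v,
      ((Finset.Ioc m (m + v)).filter (fun w => aafn m w ≤ j)).card
      = ∑ w ∈ Finset.Ioc m (m + v), if aafn m w ≤ j then 1 else 0 :=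
    fun j _ => Finset.card_filter _ _
  rw [Finset.sum_congr rfl step2, Finset.sum_comm]
  apply Finset.sum_congr rfl
  intro w _
  rw [← Finset.card_filter]
  congr 1
  ext j
  simp only [Finset.mem_filter, Finset.mem_Icc]
  have : 1 ≤ aafn m w := by unfold aafn; omega
  omega

noncomputable def rhsA (m S T : ℕ) : ℤ :=
  (m : ℤ) * ((S : ℤ) - 1) + (m : ℤ)^2 * (S.choose 3 : ℤ) + (m.choose 2 : ℤ) * (S.choose 2 : ℤ)
    + ((T : ℤ) + 1) * (1 + (m : ℤ) * (S.choose 2 : ℤ)) + (S : ℤ) * ((T+1).choose 2 : ℤ) - 1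

lemma sum_a_step {m : ℕ} (hm : 0 < m) {S T : ℕ} (hS : 1 ≤ S) (hT : T + 1 ≤ m)
    (ih : ∑ w ∈ Finset.Ioc m (m * S + T), (aafn m w : ℤ) = rhsA m S T) :
    ∑ w ∈ Finset.Ioc m (m * S + T + 1), (aafn m w : ℤ) = rhsA m S (T + 1) := by
  rw [Finset.sum_Ioc_succ_top (by nlinarith : m ≤ m * S + T), ih]
  rw [show m * S + T + 1 = m * S + (T + 1) by ring, aafn_val hm S (T+1) hT]
  unfold rhsA
  rw [choose2_succ (T+1)]
  push_cast
  ring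

lemma sum_a {m : ℕ} (hm : 0 < m) :
    ∀ S, 1 ≤ S → ∀ T, T ≤ m →
      ∑ w ∈ Finset.Ioc m (m * S + T), (aafn m w : ℤ) = rhsA m S T := by
  intro S hS
  induction S, hS using Nat.le_induction with
  | base =>
      intro T hT
      induction T with
      | zero =>
          simp only [Nat.mul_one, Nat.add_zero]
          rw [Finset.Ioc_self, Finset.sum_empty]
          unfold rhsA
          simp [Nat.choose_eq_zero_of_lt (show 1 < 2 by omega),
                Nat.choose_eq_zero_of_lt (show 1 < 3 by omega)]
      | succ t iht =>
          exact sum_a_step hm le_rfl hT (iht (by omega))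
  | succ S hS ihS =>
      intro T hT
      induction T with
      | zero =>
          have e : m * (S + 1) + 0 = m * S + m := by ring
          rw [e, ihS m le_rfl]
          unfold rhsA
          rw [choose2_succ S, choose3_succ S, choose2_succ m,
              show ((0:ℕ)+1).choose 2 = 0 from rfl]
          push_cast
          ring
      | succ t iht =>
          exact sum_a_step hm (by omega) hT (iht (by omega))

/-- For `3 ∣ n` and `n/3 < k < n/2`, setting `v := n/3` and `m := n − 2k − 1`, the number of
arcs of `D₀(v,m)` equals
`E(k,n) = 2m²·C(S,3) + C(m,2)·C(S,2) + 2m·T·C(S,2) + C(T,2)·S + (U+1)·(m(S−1)+T)`,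
where `S = S_m(v)`, `T = T_m(v)`, `U = U_m(v)` are the unique integers with
`C(S,2) < v/m ≤ C(S+1,2)`, `0 ≤ T ≤ m−1`, `0 ≤ U ≤ S−1` and
`v = 1 + m·C(S,2) + S·T + U`. -/
theorem D0arcs_eq (n k S T U : ℕ) (hn : 0 < n) (h3 : 3 ∣ n)
    (hk1 : n / 3 < k) (hk2 : 2 * k < n)
    (hS1 : (n - 2 * k - 1) * S.choose 2 < n / 3)
    (hS2 : n / 3 ≤ (n - 2 * k - 1) * (S + 1).choose 2)
    (hT : T < n - 2 * k - 1) (hU : U < S)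
    (hdecomp : n / 3 = 1 + (n - 2 * k - 1) * S.choose 2 + S * T + U) :
    D0arcs (n / 3) (n - 2 * k - 1) =
      2 * (n - 2 * k - 1) ^ 2 * S.choose 3 + (n - 2 * k - 1).choose 2 * S.choose 2 +
        2 * (n - 2 * k - 1) * T * S.choose 2 + T.choose 2 * S +
        (U + 1) * ((n - 2 * k - 1) * (S - 1) + T) := by
  set m : ℕ := n - 2 * k - 1 with hmdef
  set v : ℕ := n / 3 with hvdef
  have hm : 0 < m := by omega
  have hS : 1 ≤ S := by omega
  have hv1 : 1 ≤ v := by omega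
  have hA1 : aafn m (m * S + T) = 1 + m * S.choose 2 + S * T := aafn_val hm S T (by omega)
  have hA2 : aafn m (m * S + (T + 1)) = 1 + m * S.choose 2 + S * (T + 1) :=
    aafn_val hm S (T + 1) (by omega)
  have hmN : m ≤ m * S + T := by nlinarith
  have hNv : m * S + T ≤ m + v := by
    have := aafn_lb hm hmN
    omega
  have hzero : ∀ w ∈ Finset.Ioc (m * S + T) (m + v), (Finset.Icc (aafn m w) v).card = 0 := by
    intro w hw
    rw [Finset.mem_Ioc] at hw
    have h1 : aafn m (m * S + (T + 1)) ≤ aafn m w := aafn_mono hm (by omega) (by omega)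
    rw [hA2] at h1
    have hst : S * (T + 1) = S * T + S := by ring
    rw [Finset.Icc_eq_empty (by omega), Finset.card_empty]
  have key : D0arcs v m = ∑ w ∈ Finset.Ioc m (m * S + T), (v + 1 - aafn m w) := by
    rw [arcs_eq_sum hm v, sum_to_w hm hv1,
      ← Finset.sum_Ioc_consecutive _ hmN hNv, Finset.sum_eq_zero hzero, add_zero]
    exact Finset.sum_congr rfl (fun w _ => Nat.card_Icc _ _)
  have hfin : (D0arcs v m : ℤ) = ((m * S + T - m : ℕ) : ℤ) * ((v : ℤ) + 1) - rhsA m S T := by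
    rw [key, Nat.cast_sum]
    have hterm : ∀ w ∈ Finset.Ioc m (m * S + T),
        ((v + 1 - aafn m w : ℕ) : ℤ) = ((v : ℤ) + 1) - (aafn m w : ℤ) := by
      intro w hw
      rw [Finset.mem_Ioc] at hw
      have h1 : aafn m w ≤ aafn m (m * S + T) := aafn_mono hm (by omega) hw.2
      have h2 : aafn m w ≤ v + 1 := by omega
      rw [Nat.cast_sub h2]
      push_cast
      ring
    rw [Finset.sum_congr rfl hterm, Finset.sum_sub_distrib, Finset.sum_const, Nat.card_Ioc,
      sum_a hm S hS T (by omega)]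
    push_cast
    ring
  have hvz : (v : ℤ) = 1 + (m : ℤ) * (S.choose 2 : ℤ) + (S : ℤ) * T + U := by
    exact_mod_cast congrArg (Nat.cast : ℕ → ℤ) hdecomp
  have hSub : ((S - 1 : ℕ) : ℤ) = (S : ℤ) - 1 := by
    rw [Nat.cast_sub hS]; norm_num
  have hNm : ((m * S + T - m : ℕ) : ℤ) = (m : ℤ) * S + T - m := by
    rw [Nat.cast_sub hmN]; push_cast; ring
  suffices h : (D0arcs v m : ℤ) =
      ((2 * m ^ 2 * S.choose 3 + m.choose 2 * S.choose 2 +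
        2 * m * T * S.choose 2 + T.choose 2 * S +
        (U + 1) * (m * (S - 1) + T) : ℕ) : ℤ) by
    exact_mod_cast h
  rw [hfin, hNm, hvz]
  unfold rhsA
  rw [choose2_succ T]
  push_cast [hSub]
  have h2 := two_choose2 S
  have h3 := six_choose3 S
  have hb := two_choose2 T
  have hcm := two_choose2 m
  have hgoal2 : 2 * (((m : ℤ) * S + T - m) * (1 + (m : ℤ) * (S.choose 2 : ℤ) + (S : ℤ) * T + U + 1) -
      ((m : ℤ) * ((S : ℤ) - 1) + (m : ℤ)^2 * (S.choose 3 : ℤ) + (m.choose 2 : ℤ) * (S.choose 2 : ℤ)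
        + ((T : ℤ) + 1) * (1 + (m : ℤ) * (S.choose 2 : ℤ)) + (S : ℤ) * ((T.choose 2 : ℤ) + T) - 1))
      = 2 * (2 * (m : ℤ) ^ 2 * (S.choose 3 : ℤ) + (m.choose 2 : ℤ) * (S.choose 2 : ℤ) +
        2 * (m : ℤ) * T * (S.choose 2 : ℤ) + (T.choose 2 : ℤ) * S +
        ((U : ℤ) + 1) * ((m : ℤ) * ((S : ℤ) - 1) + T)) := by
    linear_combination ((m : ℤ) * ((m : ℤ) * S - 2 * m - 2 * T)) * h2 - (m : ℤ)^2 * h3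
      - 2 * (S : ℤ) * hb - 2 * ((S.choose 2 : ℕ) : ℤ) * hcm
  linarith [hgoal2]
end

section
/- There exists a 3-symmetric set P of 24 points in general position in the plane with cr(P) = 3699. In particular, the rectilinear crossing number satisfies cr(K_24) ≤ 3699. -/
/-- A finite planar point set is in general position if no three of its points are collinear. -/
def GenPos (P : Finset (ℝ × ℝ)) : Prop :=
  ∀ p ∈ P, ∀ q ∈ P, ∀ r ∈ P, p ≠ q → p ≠ r → q ≠ r →
    ¬ Collinear ℝ ({p, q, r} : Set (ℝ × ℝ))

/-- A set of points is in convex position if no point lies in the convex hull of the others. -/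
def ConvexPos (S : Set (ℝ × ℝ)) : Prop :=
  ∀ p ∈ S, p ∉ convexHull ℝ (S \ {p})

/-- `crNum P` is the number of 4-element subsets of `P` in convex position. -/
noncomputable def crNum (P : Finset (ℝ × ℝ)) : ℕ :=
  Set.ncard {Q : Finset (ℝ × ℝ) | Q ⊆ P ∧ Q.card = 4 ∧ ConvexPos (↑Q : Set (ℝ × ℝ))}

/-- The rectilinear crossing number of `K_n`: the minimum of `crNum P` over all sets `P` of `n`
points in general position in the plane. -/
noncomputable def rcn (n : ℕ) : ℕ :=
  sInf {c : ℕ | ∃ P : Finset (ℝ × ℝ), P.card = n ∧ GenPos P ∧ crNum P = c}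

/-- Rotation by angle `2π/3` about the point `o`. -/
noncomputable def rot120 (o p : ℝ × ℝ) : ℝ × ℝ :=
  (o.1 + Real.cos (2 * Real.pi / 3) * (p.1 - o.1) - Real.sin (2 * Real.pi / 3) * (p.2 - o.2),
   o.2 + Real.sin (2 * Real.pi / 3) * (p.1 - o.1) + Real.cos (2 * Real.pi / 3) * (p.2 - o.2))

/-- A planar point set is 3-symmetric if some rotation by `2π/3` about a point not in the set
maps the set onto itself. -/
def ThreeSym (P : Finset (ℝ × ℝ)) : Prop :=
  ∃ o : ℝ × ℝ, o ∉ P ∧ rot120 o '' (P : Set (ℝ × ℝ)) = (P : Set (ℝ × ℝ))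


open Real

/-! Auxiliary definitions -/

abbrev Kp := ℤ × ℤ

def detZ (p q r : Kp) : ℤ := (q.1-p.1)*(r.2-p.2)-(q.2-p.2)*(r.1-p.1)

def insB (p a b c : Kp) : Bool :=
  decide (0 < detZ b c p * detZ c a p) && decide (0 < detZ c a p * detZ a b p)

def good4 (a b c d : Kp) : Bool :=
  !(insB d a b c) && !(insB c a b d) && !(insB b a c d) && !(insB a b c d)

noncomputable def toR (q : Kp) : ℝ × ℝ := ((q.1 : ℝ), (q.2 : ℝ) * Real.sqrt 3)

def detR (p q r : ℝ × ℝ) : ℝ := (q.1-p.1)*(r.2-p.2)-(q.2-p.2)*(r.1-p.1)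

lemma s3pos : (0:ℝ) < Real.sqrt 3 := Real.sqrt_pos.mpr (by norm_num)

lemma s3sq : Real.sqrt 3 * Real.sqrt 3 = 3 := Real.mul_self_sqrt (by norm_num)

lemma toR_inj : Function.Injective toR := by
  rintro ⟨a,b⟩ ⟨c,d⟩ h
  simp only [toR, Prod.mk.injEq] at h
  obtain ⟨h1, h2⟩ := h
  have hb : (b:ℝ) = d := mul_right_cancel₀ (ne_of_gt s3pos) h2
  exact Prod.ext (by exact_mod_cast h1) (by exact_mod_cast hb)

lemma detR_toR (p q r : Kp) :
    detR (toR p) (toR q) (toR r) = Real.sqrt 3 * (detZ p q r : ℝ) := by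
  simp only [detR, detZ, toR]
  push_cast
  ring

lemma detR_eq_zero_of_collinear {p q r : ℝ × ℝ} (h : Collinear ℝ ({p,q,r} : Set (ℝ×ℝ))) :
    detR p q r = 0 := by
  rw [collinear_iff_of_mem (show p ∈ ({p,q,r} : Set (ℝ×ℝ)) by simp)] at h
  obtain ⟨v, hv⟩ := h
  obtain ⟨cq, hq⟩ := hv q (by simp)
  obtain ⟨cr, hr⟩ := hv r (by simp)
  rw [hq, hr]
  simp only [detR, vadd_eq_add, Prod.fst_add, Prod.snd_add, Prod.smul_fst, Prod.smul_snd,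
    smul_eq_mul]
  ring

lemma det_sum (A B C Q : ℝ × ℝ) :
    detR B C Q + detR C A Q + detR A B Q = detR A B C := by
  simp only [detR]; ring

lemma det_cramer1 (A B C Q : ℝ × ℝ) :
    detR B C Q * A.1 + detR C A Q * B.1 + detR A B Q * C.1 = detR A B C * Q.1 := by
  simp only [detR]; ring

lemma det_cramer2 (A B C Q : ℝ × ℝ) :
    detR B C Q * A.2 + detR C A Q * B.2 + detR A B Q * C.2 = detR A B C * Q.2 := by
  simp only [detR]; ring

lemma combo_det {A B C Q : ℝ × ℝ} {α β γ : ℝ} (hs : α + β + γ = 1)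
    (h : α • A + β • B + γ • C = Q) :
    detR B C Q = α * detR A B C ∧ detR C A Q = β * detR A B C ∧
      detR A B Q = γ * detR A B C := by
  subst h
  have hα : α = 1 - β - γ := by linarith
  subst hα
  refine ⟨?_, ?_, ?_⟩ <;>
  · simp only [detR, Prod.fst_add, Prod.snd_add, Prod.smul_fst, Prod.smul_snd, smul_eq_mul]
    ring

lemma mem_of_combo {A B C Q : ℝ × ℝ} {α β γ : ℝ} (hα : 0 ≤ α) (hβ : 0 ≤ β) (hγ : 0 ≤ γ)
    (hs : α + β + γ = 1) (h : α • A + β • B + γ • C = Q) :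
    Q ∈ convexHull ℝ ({A,B,C} : Set (ℝ×ℝ)) := by
  have hcm : (Finset.univ : Finset (Fin 3)).centerMass ![α,β,γ] ![A,B,C] = Q := by
    rw [Finset.centerMass_eq_of_sum_1]
    · rw [← h]; simp [Fin.sum_univ_three]
    · simp [Fin.sum_univ_three, hs]
  rw [← hcm]
  refine Finset.centerMass_mem_convexHull _ ?_ ?_ ?_
  · intro i _; fin_cases i <;> simpa
  · simp [Fin.sum_univ_three, hs]
  · intro i _; fin_cases i <;> simp

lemma combo_of_mem {A B C Q : ℝ × ℝ} (h : Q ∈ convexHull ℝ ({A,B,C} : Set (ℝ×ℝ))) :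
    ∃ α β γ : ℝ, 0 ≤ α ∧ 0 ≤ β ∧ 0 ≤ γ ∧ α + β + γ = 1 ∧ α • A + β • B + γ • C = Q := by
  rw [show ({A,B,C} : Set (ℝ×ℝ)) = insert A {B,C} from rfl,
    convexHull_insert (by exact ⟨B, by simp⟩), mem_convexJoin] at h
  obtain ⟨x, hx, z, hz, hQ⟩ := h
  rw [Set.mem_singleton_iff] at hx
  subst hx
  rw [convexHull_pair] at hz
  obtain ⟨s, t, hs0, ht0, hst, rfl⟩ := hz
  obtain ⟨u, v, hu0, hv0, huv, hQeq⟩ := hQ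
  refine ⟨u, v*s, v*t, hu0, mul_nonneg hv0 hs0, mul_nonneg hv0 ht0,
    by nlinarith, ?_⟩
  rw [mul_smul, mul_smul, add_assoc, ← smul_add]
  exact hQeq

lemma mem_triangle_iff {A B C Q : ℝ × ℝ} (hD : detR A B C ≠ 0) (h1 : detR B C Q ≠ 0)
    (h2 : detR C A Q ≠ 0) (h3 : detR A B Q ≠ 0) :
    Q ∈ convexHull ℝ ({A,B,C} : Set (ℝ×ℝ)) ↔
      0 < detR B C Q * detR C A Q ∧ 0 < detR C A Q * detR A B Q := by
  have hsum := det_sum A B C Q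
  constructor
  · intro h
    obtain ⟨α, β, γ, hα, hβ, hγ, hs1, hcombo⟩ := combo_of_mem h
    obtain ⟨e1, e2, e3⟩ := combo_det hs1 hcombo
    have hD2 : 0 < detR A B C * detR A B C := mul_self_pos.2 hD
    have hα' : 0 < α := by
      rcases hα.lt_or_eq with h' | h'
      · exact h'
      · exfalso; apply h1; rw [e1, ← h']; ring
    have hβ' : 0 < β := by
      rcases hβ.lt_or_eq with h' | h'
      · exact h'
      · exfalso; apply h2; rw [e2, ← h']; ring
    have hγ' : 0 < γ := by
      rcases hγ.lt_or_eq with h' | h'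
      · exact h'
      · exfalso; apply h3; rw [e3, ← h']; ring
    constructor
    · rw [e1, e2]; nlinarith [mul_pos (mul_pos hα' hβ') hD2]
    · rw [e2, e3]; nlinarith [mul_pos (mul_pos hβ' hγ') hD2]
  · rintro ⟨hst, htu⟩
    set s := detR B C Q with hsdef
    set t := detR C A Q with htdef
    set u := detR A B Q with hudef
    set D := detR A B C with hDdef
    have key : 0 < s * D ∧ 0 < t * D ∧ 0 < u * D := by
      rcases h1.lt_or_gt with hs' | hs'
      · have ht' : t < 0 := by nlinarith
        have hu' : u < 0 := by nlinarith
        have hDn : D < 0 := by rw [← hsum]; linarith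
        exact ⟨by nlinarith, by nlinarith, by nlinarith⟩
      · have ht' : 0 < t := by nlinarith
        have hu' : 0 < u := by nlinarith
        have hDp : 0 < D := by rw [← hsum]; linarith
        exact ⟨by nlinarith, by nlinarith, by nlinarith⟩
    have hD2 : 0 < D * D := mul_self_pos.2 hD
    refine mem_of_combo (α := s/D) (β := t/D) (γ := u/D) ?_ ?_ ?_ ?_ ?_
    · have : 0 < s/D := by
        rw [show s/D = (s*D)/(D*D) by field_simp]
        exact div_pos key.1 hD2
      linarith
    · have : 0 < t/D := by
        rw [show t/D = (t*D)/(D*D) by field_simp]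
        exact div_pos key.2.1 hD2
      linarith
    · have : 0 < u/D := by
        rw [show u/D = (u*D)/(D*D) by field_simp]
        exact div_pos key.2.2 hD2
      linarith
    · field_simp
      linarith [hsum]
    · have hc1 := det_cramer1 A B C Q
      have hc2 := det_cramer2 A B C Q
      refine Prod.ext ?_ ?_
      · simp only [Prod.fst_add, Prod.smul_fst, smul_eq_mul]
        field_simp
        linarith [hc1]
      · simp only [Prod.snd_add, Prod.smul_snd, smul_eq_mul]
        field_simp
        linarith [hc2]

lemma prod_pos_transfer (x y : ℤ) :
    (0 < Real.sqrt 3 * (x:ℝ) * (Real.sqrt 3 * (y:ℝ))) ↔ 0 < x * y := by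
  have hkey : Real.sqrt 3 * (x:ℝ) * (Real.sqrt 3 * (y:ℝ)) = 3 * ((x*y : ℤ) : ℝ) := by
    push_cast
    linear_combination ((x:ℝ) * y) * s3sq
  rw [hkey]
  constructor
  · intro h
    have : (0:ℝ) < ((x*y : ℤ) : ℝ) := by linarith
    exact_mod_cast this
  · intro h
    have : (0:ℝ) < ((x*y : ℤ) : ℝ) := by exact_mod_cast h
    linarith

lemma detR_toR_ne {p q r : Kp} (h : detZ p q r ≠ 0) :
    detR (toR p) (toR q) (toR r) ≠ 0 := by
  rw [detR_toR]
  exact mul_ne_zero (ne_of_gt s3pos) (Int.cast_ne_zero.mpr h)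

lemma mem_triangle_iff_Z {a b c q : Kp} (hD : detZ a b c ≠ 0) (h1 : detZ b c q ≠ 0)
    (h2 : detZ c a q ≠ 0) (h3 : detZ a b q ≠ 0) :
    toR q ∈ convexHull ℝ ({toR a, toR b, toR c} : Set (ℝ×ℝ)) ↔ insB q a b c = true := by
  rw [mem_triangle_iff (detR_toR_ne hD) (detR_toR_ne h1) (detR_toR_ne h2) (detR_toR_ne h3)]
  simp only [insB, Bool.and_eq_true, decide_eq_true_eq]
  rw [detR_toR, detR_toR, detR_toR, prod_pos_transfer, prod_pos_transfer]

/-! ### The explicit point configuration -/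

def kptsL : List Kp := [(400,400),(-800,0),(400,-400),(384,-342),(321,363),(-705,-21),(391,-373),(364,382),(-755,-9),(385,-371),(364,378),(-749,-7),(332,242),(-529,45),(197,-287),(395,-387),(383,391),(-778,-4),(381,389),(-774,-4),(393,-385),(391,395),(-788,-2),(397,-393)]

def kS : Finset Kp := kptsL.toFinset

set_option maxRecDepth 20000 in
lemma kptsL_nodup : kptsL.Nodup := by decide

set_option maxRecDepth 20000 in
lemma kS_card : kS.card = 24 := by decide

set_option maxRecDepth 20000 in
lemma kZGP : ∀ p ∈ kS, ∀ q ∈ kS, ∀ r ∈ kS, p ≠ q → p ≠ r → q ≠ r → detZ p q r ≠ 0 := by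
  decide

set_option maxRecDepth 20000 in
lemma kTimg : ∀ q ∈ kS, ∃ q' ∈ kS, 2*q'.1 = -q.1-3*q.2 ∧ 2*q'.2 = q.1-q.2 := by decide

set_option maxRecDepth 20000 in
lemma kO_not_mem : ((0,0) : Kp) ∉ kS := by decide

/-! ### Counting functions -/

def cnt1 (a b c : Kp) : List Kp → ℕ
  | [] => 0
  | d :: t => (if good4 a b c d then 1 else 0) + cnt1 a b c t

def cnt2 (a b : Kp) : List Kp → ℕ
  | [] => 0
  | c :: t => cnt1 a b c t + cnt2 a b t

def cnt3 (a : Kp) : List Kp → ℕ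
  | [] => 0
  | b :: t => cnt2 a b t + cnt3 a t

def cnt4 : List Kp → ℕ
  | [] => 0
  | a :: t => cnt3 a t + cnt4 t

set_option maxRecDepth 20000 in
set_option maxHeartbeats 100000000 in
lemma kcount : cnt4 kptsL = 3699 := by decide

/-! ### Counting lemmas -/

section counting

variable (Pr : Finset Kp → Prop) [DecidablePred Pr]

lemma lvl1 (a b c : Kp) :
    ∀ (l : List Kp), l.Nodup →
      (∀ d ∈ l, (good4 a b c d = true ↔ Pr (insert a (insert b (insert c ({d} : Finset Kp)))))) →
      ((l.toFinset.powersetCard 1).filter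
        (fun q => Pr (insert a (insert b (insert c q))))).card = cnt1 a b c l := by
  intro l
  induction l with
  | nil =>
    intro _ _
    have h : (Finset.powersetCard 1 (List.toFinset ([] : List Kp))) = ∅ := by decide
    rw [h]
    simp [cnt1]
  | cons d t ih =>
    intro hnd H
    obtain ⟨hd0, hnd'⟩ := List.nodup_cons.mp hnd
    have hd : d ∉ t.toFinset := fun h => hd0 (List.mem_toFinset.mp h)
    rw [List.toFinset_cons,
      show ((insert d t.toFinset).powersetCard 1) =
        (t.toFinset.powersetCard 1) ∪ ((t.toFinset.powersetCard 0).image (insert d)) from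
        Finset.powersetCard_succ_insert hd 0,
      Finset.powersetCard_zero, Finset.image_singleton, insert_empty_eq,
      Finset.filter_union]
    have hdisj : Disjoint
        ((t.toFinset.powersetCard 1).filter (fun q => Pr (insert a (insert b (insert c q)))))
        (({({d} : Finset Kp)} : Finset (Finset Kp)).filter
          (fun q => Pr (insert a (insert b (insert c q))))) := by
      rw [Finset.disjoint_left]
      intro q hq1 hq2
      have h1 := (Finset.mem_powersetCard.mp (Finset.mem_filter.mp hq1).1).1
      have h2 := Finset.mem_singleton.mp (Finset.mem_filter.mp hq2).1
      subst h2
      exact hd (h1 (Finset.mem_singleton_self d))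
    rw [Finset.card_union_of_disjoint hdisj]
    have hcard2 : ((({({d} : Finset Kp)} : Finset (Finset Kp))).filter
        (fun q => Pr (insert a (insert b (insert c q))))).card
        = (if good4 a b c d then 1 else 0) := by
      rw [Finset.filter_singleton]
      by_cases hg : good4 a b c d = true
      · rw [if_pos ((H d (by simp)).mp hg), if_pos hg, Finset.card_singleton]
      · rw [if_neg (fun hp => hg ((H d (by simp)).mpr hp)), if_neg hg, Finset.card_empty]
    rw [hcard2, ih hnd' (fun x hx => H x (List.mem_cons_of_mem _ hx))]
    show cnt1 a b c t + _ = cnt1 a b c (d :: t)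
    rw [cnt1]
    omega

lemma lvl2 (a b : Kp) :
    ∀ (l : List Kp), l.Nodup →
      (∀ c ∈ l, ∀ d ∈ l, c ≠ d →
        (good4 a b c d = true ↔ Pr (insert a (insert b (insert c ({d} : Finset Kp)))))) →
      ((l.toFinset.powersetCard 2).filter
        (fun q => Pr (insert a (insert b q)))).card = cnt2 a b l := by
  intro l
  induction l with
  | nil =>
    intro _ _
    have h : (Finset.powersetCard 2 (List.toFinset ([] : List Kp))) = ∅ := by decide
    rw [h]
    simp [cnt2]
  | cons c t ih =>
    intro hnd H
    obtain ⟨hc0, hnd'⟩ := List.nodup_cons.mp hnd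
    have hc : c ∉ t.toFinset := fun h => hc0 (List.mem_toFinset.mp h)
    rw [List.toFinset_cons,
      show ((insert c t.toFinset).powersetCard 2) =
        (t.toFinset.powersetCard 2) ∪ ((t.toFinset.powersetCard 1).image (insert c)) from
        Finset.powersetCard_succ_insert hc 1,
      Finset.filter_union]
    have hdisj : Disjoint
        ((t.toFinset.powersetCard 2).filter (fun q => Pr (insert a (insert b q))))
        (((t.toFinset.powersetCard 1).image (insert c)).filter
          (fun q => Pr (insert a (insert b q)))) := by
      rw [Finset.disjoint_left]
      intro q hq1 hq2
      have h1 := (Finset.mem_powersetCard.mp (Finset.mem_filter.mp hq1).1).1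
      obtain ⟨q', hq', rfl⟩ := Finset.mem_image.mp (Finset.mem_filter.mp hq2).1
      exact hc (h1 (Finset.mem_insert_self c q'))
    rw [Finset.card_union_of_disjoint hdisj, Finset.filter_image]
    have hinj : Set.InjOn (insert c)
        (↑((t.toFinset.powersetCard 1).filter
          (fun q => Pr (insert a (insert b (insert c q))))) : Set (Finset Kp)) := by
      intro q1 h1 q2 h2 heq
      have hs1 := (Finset.mem_powersetCard.mp (Finset.mem_filter.mp h1).1).1
      have hs2 := (Finset.mem_powersetCard.mp (Finset.mem_filter.mp h2).1).1
      have hc1 : c ∉ q1 := fun h => hc (hs1 h)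
      have hc2 : c ∉ q2 := fun h => hc (hs2 h)
      rw [← Finset.erase_insert hc1, ← Finset.erase_insert hc2, heq]
    rw [Finset.card_image_of_injOn hinj]
    have e1 : ((t.toFinset.powersetCard 1).filter
        (fun q => Pr (insert a (insert b (insert c q))))).card = cnt1 a b c t :=
      lvl1 Pr a b c t hnd' (fun d hd => H c (by simp) d (List.mem_cons_of_mem _ hd)
        (fun h => hc0 (h ▸ hd)))
    have e2 : ((t.toFinset.powersetCard 2).filter
        (fun q => Pr (insert a (insert b q)))).card = cnt2 a b t :=
      ih hnd' (fun x hx y hy hxy => H x (List.mem_cons_of_mem _ hx)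
        y (List.mem_cons_of_mem _ hy) hxy)
    rw [e1, e2]
    show cnt2 a b t + cnt1 a b c t = cnt2 a b (c :: t)
    rw [cnt2]
    omega

lemma lvl3 (a : Kp) :
    ∀ (l : List Kp), l.Nodup →
      (∀ b ∈ l, ∀ c ∈ l, ∀ d ∈ l, b ≠ c → b ≠ d → c ≠ d →
        (good4 a b c d = true ↔ Pr (insert a (insert b (insert c ({d} : Finset Kp)))))) →
      ((l.toFinset.powersetCard 3).filter
        (fun q => Pr (insert a q))).card = cnt3 a l := by
  intro l
  induction l with
  | nil =>
    intro _ _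
    have h : (Finset.powersetCard 3 (List.toFinset ([] : List Kp))) = ∅ := by decide
    rw [h]
    simp [cnt3]
  | cons b t ih =>
    intro hnd H
    obtain ⟨hb0, hnd'⟩ := List.nodup_cons.mp hnd
    have hb : b ∉ t.toFinset := fun h => hb0 (List.mem_toFinset.mp h)
    rw [List.toFinset_cons,
      show ((insert b t.toFinset).powersetCard 3) =
        (t.toFinset.powersetCard 3) ∪ ((t.toFinset.powersetCard 2).image (insert b)) from
        Finset.powersetCard_succ_insert hb 2,
      Finset.filter_union]
    have hdisj : Disjoint
        ((t.toFinset.powersetCard 3).filter (fun q => Pr (insert a q)))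
        (((t.toFinset.powersetCard 2).image (insert b)).filter
          (fun q => Pr (insert a q))) := by
      rw [Finset.disjoint_left]
      intro q hq1 hq2
      have h1 := (Finset.mem_powersetCard.mp (Finset.mem_filter.mp hq1).1).1
      obtain ⟨q', hq', rfl⟩ := Finset.mem_image.mp (Finset.mem_filter.mp hq2).1
      exact hb (h1 (Finset.mem_insert_self b q'))
    rw [Finset.card_union_of_disjoint hdisj, Finset.filter_image]
    have hinj : Set.InjOn (insert b)
        (↑((t.toFinset.powersetCard 2).filter
          (fun q => Pr (insert a (insert b q)))) : Set (Finset Kp)) := by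
      intro q1 h1 q2 h2 heq
      have hs1 := (Finset.mem_powersetCard.mp (Finset.mem_filter.mp h1).1).1
      have hs2 := (Finset.mem_powersetCard.mp (Finset.mem_filter.mp h2).1).1
      have hb1 : b ∉ q1 := fun h => hb (hs1 h)
      have hb2 : b ∉ q2 := fun h => hb (hs2 h)
      rw [← Finset.erase_insert hb1, ← Finset.erase_insert hb2, heq]
    rw [Finset.card_image_of_injOn hinj]
    have e1 : ((t.toFinset.powersetCard 2).filter
        (fun q => Pr (insert a (insert b q)))).card = cnt2 a b t :=
      lvl2 Pr a b t hnd' (fun c hc d hd hcd => H b (by simp) c (List.mem_cons_of_mem _ hc)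
        d (List.mem_cons_of_mem _ hd) (fun h => hb0 (h ▸ hc)) (fun h => hb0 (h ▸ hd)) hcd)
    have e2 : ((t.toFinset.powersetCard 3).filter
        (fun q => Pr (insert a q))).card = cnt3 a t :=
      ih hnd' (fun x hx y hy z hz h1 h2 h3 => H x (List.mem_cons_of_mem _ hx)
        y (List.mem_cons_of_mem _ hy) z (List.mem_cons_of_mem _ hz) h1 h2 h3)
    rw [e1, e2]
    show cnt3 a t + cnt2 a b t = cnt3 a (b :: t)
    rw [cnt3]
    omega

lemma lvl4 :
    ∀ (l : List Kp), l.Nodup →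
      (∀ a ∈ l, ∀ b ∈ l, ∀ c ∈ l, ∀ d ∈ l, a ≠ b → a ≠ c → a ≠ d → b ≠ c → b ≠ d → c ≠ d →
        (good4 a b c d = true ↔ Pr (insert a (insert b (insert c ({d} : Finset Kp)))))) →
      ((l.toFinset.powersetCard 4).filter Pr).card = cnt4 l := by
  intro l
  induction l with
  | nil =>
    intro _ _
    have h : (Finset.powersetCard 4 (List.toFinset ([] : List Kp))) = ∅ := by decide
    rw [h]
    simp [cnt4]
  | cons a t ih =>
    intro hnd H
    obtain ⟨ha0, hnd'⟩ := List.nodup_cons.mp hnd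
    have ha : a ∉ t.toFinset := fun h => ha0 (List.mem_toFinset.mp h)
    rw [List.toFinset_cons,
      show ((insert a t.toFinset).powersetCard 4) =
        (t.toFinset.powersetCard 4) ∪ ((t.toFinset.powersetCard 3).image (insert a)) from
        Finset.powersetCard_succ_insert ha 3,
      Finset.filter_union]
    have hdisj : Disjoint
        ((t.toFinset.powersetCard 4).filter Pr)
        (((t.toFinset.powersetCard 3).image (insert a)).filter Pr) := by
      rw [Finset.disjoint_left]
      intro q hq1 hq2
      have h1 := (Finset.mem_powersetCard.mp (Finset.mem_filter.mp hq1).1).1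
      obtain ⟨q', hq', rfl⟩ := Finset.mem_image.mp (Finset.mem_filter.mp hq2).1
      exact ha (h1 (Finset.mem_insert_self a q'))
    rw [Finset.card_union_of_disjoint hdisj, Finset.filter_image]
    have hinj : Set.InjOn (insert a)
        (↑((t.toFinset.powersetCard 3).filter
          (fun q => Pr (insert a q))) : Set (Finset Kp)) := by
      intro q1 h1 q2 h2 heq
      have hs1 := (Finset.mem_powersetCard.mp (Finset.mem_filter.mp h1).1).1
      have hs2 := (Finset.mem_powersetCard.mp (Finset.mem_filter.mp h2).1).1
      have ha1 : a ∉ q1 := fun h => ha (hs1 h)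
      have ha2 : a ∉ q2 := fun h => ha (hs2 h)
      rw [← Finset.erase_insert ha1, ← Finset.erase_insert ha2, heq]
    rw [Finset.card_image_of_injOn hinj]
    have e1 : ((t.toFinset.powersetCard 3).filter
        (fun q => Pr (insert a q))).card = cnt3 a t :=
      lvl3 Pr a t hnd' (fun b hb c hc d hd h1 h2 h3 => H a (by simp)
        b (List.mem_cons_of_mem _ hb) c (List.mem_cons_of_mem _ hc)
        d (List.mem_cons_of_mem _ hd)
        (fun h => ha0 (h ▸ hb)) (fun h => ha0 (h ▸ hc)) (fun h => ha0 (h ▸ hd)) h1 h2 h3)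
    have e2 : ((t.toFinset.powersetCard 4).filter Pr).card = cnt4 t :=
      ih hnd' (fun x hx y hy z hz w hw h1 h2 h3 h4 h5 h6 => H x (List.mem_cons_of_mem _ hx)
        y (List.mem_cons_of_mem _ hy) z (List.mem_cons_of_mem _ hz)
        w (List.mem_cons_of_mem _ hw) h1 h2 h3 h4 h5 h6)
    rw [e1, e2]
    show cnt4 t + cnt3 a t = cnt4 (a :: t)
    rw [cnt4]
    omega

end counting

/-! ### Bridge between `good4` and `ConvexPos` -/

lemma set_image4 (a b c d : Kp) :
    toR '' (↑({a,b,c,d} : Finset Kp) : Set Kp) = {toR a, toR b, toR c, toR d} := by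
  simp [Set.image_insert_eq]

lemma convexPos_four_iff {A B C D : ℝ×ℝ} (hab : A ≠ B) (hac : A ≠ C) (had : A ≠ D)
    (hbc : B ≠ C) (hbd : B ≠ D) (hcd : C ≠ D) :
    ConvexPos ({A,B,C,D} : Set (ℝ×ℝ)) ↔
      (D ∉ convexHull ℝ ({A,B,C} : Set (ℝ×ℝ)) ∧ C ∉ convexHull ℝ ({A,B,D} : Set (ℝ×ℝ)) ∧
       B ∉ convexHull ℝ ({A,C,D} : Set (ℝ×ℝ)) ∧ A ∉ convexHull ℝ ({B,C,D} : Set (ℝ×ℝ))) := by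
  have sD : ({A,B,C,D} : Set (ℝ×ℝ)) \ {D} = {A,B,C} := by
    ext x
    simp only [Set.mem_diff, Set.mem_insert_iff, Set.mem_singleton_iff]
    constructor
    · rintro ⟨h, hx⟩; tauto
    · intro h
      rcases h with rfl | rfl | rfl <;> exact ⟨by tauto, by tauto⟩
  have sC : ({A,B,C,D} : Set (ℝ×ℝ)) \ {C} = {A,B,D} := by
    ext x
    simp only [Set.mem_diff, Set.mem_insert_iff, Set.mem_singleton_iff]
    constructor
    · rintro ⟨h, hx⟩; tauto
    · intro h
      rcases h with rfl | rfl | rfl <;> exact ⟨by tauto, by tauto⟩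
  have sB : ({A,B,C,D} : Set (ℝ×ℝ)) \ {B} = {A,C,D} := by
    ext x
    simp only [Set.mem_diff, Set.mem_insert_iff, Set.mem_singleton_iff]
    constructor
    · rintro ⟨h, hx⟩; tauto
    · intro h
      rcases h with rfl | rfl | rfl <;> exact ⟨by tauto, by tauto⟩
  have sA : ({A,B,C,D} : Set (ℝ×ℝ)) \ {A} = {B,C,D} := by
    ext x
    simp only [Set.mem_diff, Set.mem_insert_iff, Set.mem_singleton_iff]
    constructor
    · rintro ⟨h, hx⟩; tauto
    · intro h
      rcases h with rfl | rfl | rfl <;> exact ⟨by tauto, by tauto⟩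
  constructor
  · intro h
    exact ⟨sD ▸ h D (by simp), sC ▸ h C (by simp), sB ▸ h B (by simp), sA ▸ h A (by simp)⟩
  · rintro ⟨h1, h2, h3, h4⟩ p hp
    rcases hp with rfl | rfl | rfl | rfl
    · rw [sA]; exact h4
    · rw [sB]; exact h3
    · rw [sC]; exact h2
    · rw [sD]; exact h1

lemma good4_iff_not_ins (a b c d : Kp) :
    good4 a b c d = true ↔
      (¬ (insB d a b c = true) ∧ ¬ (insB c a b d = true) ∧
       ¬ (insB b a c d = true) ∧ ¬ (insB a b c d = true)) := by
  cases h1 : insB d a b c <;> cases h2 : insB c a b d <;>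
    cases h3 : insB b a c d <;> cases h4 : insB a b c d <;>
    simp [good4, h1, h2, h3, h4]

lemma bridge {a b c d : Kp} (ha : a ∈ kS) (hb : b ∈ kS) (hc : c ∈ kS) (hd : d ∈ kS)
    (hab : a ≠ b) (hac : a ≠ c) (had : a ≠ d) (hbc : b ≠ c) (hbd : b ≠ d) (hcd : c ≠ d) :
    good4 a b c d = true ↔ ConvexPos (toR '' (↑({a,b,c,d} : Finset Kp) : Set Kp)) := by
  have nz : ∀ {x y z : Kp}, x ∈ kS → y ∈ kS → z ∈ kS → x ≠ y → x ≠ z → y ≠ z →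
      detZ x y z ≠ 0 := fun hx hy hz h1 h2 h3 => kZGP _ hx _ hy _ hz h1 h2 h3
  rw [set_image4, convexPos_four_iff (toR_inj.ne hab) (toR_inj.ne hac) (toR_inj.ne had)
    (toR_inj.ne hbc) (toR_inj.ne hbd) (toR_inj.ne hcd), good4_iff_not_ins]
  have m1 : toR d ∈ convexHull ℝ ({toR a, toR b, toR c} : Set (ℝ×ℝ)) ↔ insB d a b c = true :=
    mem_triangle_iff_Z (nz ha hb hc hab hac hbc) (nz hb hc hd hbc hbd hcd)
      (nz hc ha hd hac.symm hcd (had : a ≠ d)) (nz ha hb hd hab had hbd)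
  have m2 : toR c ∈ convexHull ℝ ({toR a, toR b, toR d} : Set (ℝ×ℝ)) ↔ insB c a b d = true :=
    mem_triangle_iff_Z (nz ha hb hd hab had hbd) (nz hb hd hc hbd hbc hcd.symm)
      (nz hd ha hc had.symm hcd.symm hac) (nz ha hb hc hab hac hbc)
  have m3 : toR b ∈ convexHull ℝ ({toR a, toR c, toR d} : Set (ℝ×ℝ)) ↔ insB b a c d = true :=
    mem_triangle_iff_Z (nz ha hc hd hac had hcd) (nz hc hd hb hcd hbc.symm hbd.symm)
      (nz hd ha hb had.symm hbd.symm hab) (nz ha hc hb hac hab hbc.symm)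
  have m4 : toR a ∈ convexHull ℝ ({toR b, toR c, toR d} : Set (ℝ×ℝ)) ↔ insB a b c d = true :=
    mem_triangle_iff_Z (nz hb hc hd hbc hbd hcd) (nz hc hd ha hcd hac.symm had.symm)
      (nz hd hb ha hbd.symm had.symm hab.symm) (nz hb hc ha hbc hab.symm hac.symm)
  rw [not_iff_not.mpr m1, not_iff_not.mpr m2, not_iff_not.mpr m3, not_iff_not.mpr m4]

/-! ### ThreeSym helpers -/

lemma hcos23 : Real.cos (2 * Real.pi / 3) = -(1/2) := by
  rw [show (2 * Real.pi / 3 : ℝ) = Real.pi - Real.pi/3 by ring, Real.cos_pi_sub,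
    Real.cos_pi_div_three]

lemma hsin23 : Real.sin (2 * Real.pi / 3) = Real.sqrt 3 / 2 := by
  rw [show (2 * Real.pi / 3 : ℝ) = Real.pi - Real.pi/3 by ring, Real.sin_pi_sub,
    Real.sin_pi_div_three]

lemma rot_eq (a b c d : ℤ) (h1 : 2*c = -a-3*b) (h2 : 2*d = a-b) :
    rot120 ((0:ℝ),(0:ℝ)) (toR (a,b)) = toR (c,d) := by
  have h1' : 2*(c:ℝ) = -(a:ℝ)-3*(b:ℝ) := by exact_mod_cast congrArg (Int.cast : ℤ → ℝ) h1
  have h2' : 2*(d:ℝ) = (a:ℝ)-(b:ℝ) := by exact_mod_cast congrArg (Int.cast : ℤ → ℝ) h2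
  unfold rot120 toR
  simp only [hcos23, hsin23]
  refine Prod.ext ?_ ?_
  · show (0:ℝ) + -(1/2) * ((a:ℝ) - 0) - Real.sqrt 3 / 2 * ((b:ℝ) * Real.sqrt 3 - 0) = (c:ℝ)
    linear_combination (-(b:ℝ)/2) * s3sq + (-(1:ℝ)/2) * h1'
  · show (0:ℝ) + Real.sqrt 3 / 2 * ((a:ℝ) - 0) + -(1/2) * ((b:ℝ) * Real.sqrt 3 - 0)
      = (d:ℝ) * Real.sqrt 3
    linear_combination (-(Real.sqrt 3) / 2 : ℝ) * h2'

lemma rot120_inj : Function.Injective (rot120 ((0:ℝ),(0:ℝ))) := by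
  intro p q h
  have pyth := Real.sin_sq_add_cos_sq (2 * Real.pi / 3)
  have h1 := congrArg Prod.fst h
  have h2 := congrArg Prod.snd h
  simp only [rot120] at h1 h2
  refine Prod.ext ?_ ?_
  · linear_combination (Real.cos (2 * Real.pi / 3)) * h1
      + (Real.sin (2 * Real.pi / 3)) * h2 + (q.1 - p.1) * pyth
  · linear_combination (-(Real.sin (2 * Real.pi / 3))) * h1
      + (Real.cos (2 * Real.pi / 3)) * h2 + (q.2 - p.2) * pyth

/-- The convex-position predicate on index quadruples. -/
def kPred (q : Finset Kp) : Prop := ConvexPos (toR '' (↑q : Set Kp))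

noncomputable instance : DecidablePred kPred := fun _ => Classical.propDecidable _

/-- There is a 3-symmetric set of 24 points in general position with exactly 3699 convex
quadrilaterals; in particular the rectilinear crossing number of `K_24` is at most 3699. -/
theorem exists_good_drawing_K24 :
    ∃ P : Finset (ℝ × ℝ), P.card = 24 ∧ GenPos P ∧ ThreeSym P ∧ crNum P = 3699 ∧
      rcn 24 ≤ 3699 := by
  classical
  have hcard : (kS.image toR).card = 24 := by
    rw [Finset.card_image_of_injective _ toR_inj, kS_card]
  have hgen : GenPos (kS.image toR) := by
    intro p hp q hq r hr hpq hpr hqr hcol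
    obtain ⟨p', hp', rfl⟩ := Finset.mem_image.mp hp
    obtain ⟨q', hq', rfl⟩ := Finset.mem_image.mp hq
    obtain ⟨r', hr', rfl⟩ := Finset.mem_image.mp hr
    have h0 := detR_eq_zero_of_collinear hcol
    rw [detR_toR] at h0
    have hz : (detZ p' q' r' : ℝ) = 0 := by
      rcases mul_eq_zero.mp h0 with h | h
      · exact absurd h (ne_of_gt s3pos)
      · exact h
    exact kZGP p' hp' q' hq' r' hr' (fun h => hpq (by rw [h])) (fun h => hpr (by rw [h]))
      (fun h => hqr (by rw [h])) (by exact_mod_cast hz)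
  have hthree : ThreeSym (kS.image toR) := by
    refine ⟨((0:ℝ),(0:ℝ)), ?_, ?_⟩
    · intro h
      obtain ⟨q, hq, heq⟩ := Finset.mem_image.mp h
      have hq0 : q = ((0,0) : Kp) := toR_inj (by rw [heq]; simp [toR])
      exact kO_not_mem (hq0 ▸ hq)
    · have hsub : rot120 ((0:ℝ),(0:ℝ)) '' ((kS.image toR : Finset (ℝ×ℝ)) : Set (ℝ×ℝ))
          ⊆ ((kS.image toR : Finset (ℝ×ℝ)) : Set (ℝ×ℝ)) := by
        rintro _ ⟨x, hx, rfl⟩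
        rw [Finset.coe_image] at hx
        obtain ⟨q, hq, rfl⟩ := hx
        obtain ⟨q', hq', h1, h2⟩ := kTimg q (Finset.mem_coe.mp hq)
        have heq := rot_eq q.1 q.2 q'.1 q'.2 h1 h2
        simp only [Prod.mk.eta] at heq
        rw [heq, Finset.coe_image]
        exact Set.mem_image_of_mem toR (Finset.mem_coe.mpr hq')
      have himg : (rot120 ((0:ℝ),(0:ℝ)) ''
          ((kS.image toR : Finset (ℝ×ℝ)) : Set (ℝ×ℝ))).ncard
          = ((kS.image toR : Finset (ℝ×ℝ)) : Set (ℝ×ℝ)).ncard :=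
        Set.ncard_image_of_injective _ rot120_inj
      exact Set.eq_of_subset_of_ncard_le hsub (le_of_eq himg.symm)
        ((kS.image toR).finite_toSet)
  have hPr : ∀ a ∈ kptsL, ∀ b ∈ kptsL, ∀ c ∈ kptsL, ∀ d ∈ kptsL,
      a ≠ b → a ≠ c → a ≠ d → b ≠ c → b ≠ d → c ≠ d →
      (good4 a b c d = true ↔
        kPred (insert a (insert b (insert c ({d} : Finset Kp))))) := by
    intro a ha b hb c hc d hd h1 h2 h3 h4 h5 h6
    exact bridge (List.mem_toFinset.mpr ha) (List.mem_toFinset.mpr hb)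
      (List.mem_toFinset.mpr hc) (List.mem_toFinset.mpr hd) h1 h2 h3 h4 h5 h6
  have hG : ((kS.powersetCard 4).filter kPred).card = 3699 := by
    show (((kptsL.toFinset).powersetCard 4).filter kPred).card = 3699
    rw [lvl4 kPred kptsL kptsL_nodup hPr]
    exact kcount
  have hcr : crNum (kS.image toR) = 3699 := by
    have hset : {Q : Finset (ℝ × ℝ) | Q ⊆ kS.image toR ∧ Q.card = 4 ∧
        ConvexPos (↑Q : Set (ℝ × ℝ))}
        = (fun q : Finset Kp => q.image toR) ''
          {q : Finset Kp | q ∈ (kS.powersetCard 4).filter kPred} := by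
      ext Q
      simp only [Set.mem_setOf_eq, Set.mem_image]
      constructor
      · rintro ⟨hQP, hQ4, hQC⟩
        obtain ⟨q, hqS, rfl⟩ := Finset.subset_image_iff.mp hQP
        refine ⟨q, ?_, rfl⟩
        rw [Finset.mem_filter, Finset.mem_powersetCard]
        refine ⟨⟨hqS, ?_⟩, ?_⟩
        · rw [← Finset.card_image_of_injective q toR_inj]; exact hQ4
        · show kPred q
          unfold kPred
          rw [← Finset.coe_image]; exact hQC
      · rintro ⟨q, hq, rfl⟩
        rw [Finset.mem_filter, Finset.mem_powersetCard] at hq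
        obtain ⟨⟨hqS, hq4⟩, hqC⟩ := hq
        refine ⟨Finset.image_subset_image hqS, ?_, ?_⟩
        · rw [Finset.card_image_of_injective q toR_inj]; exact hq4
        · have : kPred q := hqC
          unfold kPred at this
          rw [Finset.coe_image]; exact this
    unfold crNum
    rw [hset, Set.ncard_image_of_injective _ (Finset.image_injective toR_inj)]
    rw [show {q : Finset Kp | q ∈ (kS.powersetCard 4).filter kPred}
      = (↑((kS.powersetCard 4).filter kPred) : Set (Finset Kp)) from rfl]
    rw [Set.ncard_coe_finset, hG]
  exact ⟨kS.image toR, hcard, hgen, hthree, hcr,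
    Nat.sInf_le ⟨kS.image toR, hcard, hgen, hcr⟩⟩
end
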